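/- arXiv:2604.18568 — 11 statements merged into one kernel-verified Lean document; each statement's English description precedes it below -/
import Mathlib

section
/- Let p be a prime, R a commutative ring with CharP R p, n : ℕ, and μ : Matrix (Fin n) (Fin n) R. Then ξ(μ) = (det μ)^(p−1), where ξ(μ) denotes the (finite) sum, over all functions a : Fin n → Fin n → ℕ satisfying (∀ k, ∑_l a k l = p−1) and (∀ l, ∑_k a k l = p−1), of the term ((∏_k Nat.multinomial Finset.univ (fun l => a l k) : ℕ) : R) * ∏_k ∏_l (μ l k)^(a l k). -/
open Finset

/-- The operator `ξ` from the paper: the sum over all matrices of natural numbers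
`a : Fin n → Fin n → ℕ` whose every row sum and every column sum equals `p - 1`
(all such `a` have entries `< p`, so the index set below captures exactly these) of
`(∏ k, multinomial (a · k)) * ∏ k, ∏ l, (μ l k) ^ (a l k)`. -/
noncomputable def xi (p n : ℕ) {R : Type*} [CommRing R] (μ : Matrix (Fin n) (Fin n) R) : R :=
  ∑ a ∈ Finset.filter
      (fun a : Fin n → Fin n → ℕ =>
        (∀ k, ∑ l, a k l = p - 1) ∧ (∀ l, ∑ k, a k l = p - 1))
      (Fintype.piFinset fun _ => Fintype.piFinset fun _ => Finset.range p),
    ((∏ k, Nat.multinomial Finset.univ (fun l => a l k) : ℕ) : R) *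
      ∏ k, ∏ l, (μ l k) ^ (a l k)

lemma xi_map (p n : ℕ) {R S : Type*} [CommRing R] [CommRing S] (φ : R →+* S)
    (μ : Matrix (Fin n) (Fin n) R) : φ (xi p n μ) = xi p n (μ.map φ) := by
  simp [xi, map_sum, map_mul, map_prod, map_pow, Matrix.map_apply]

lemma sum_pow_card_sub_one (p : ℕ) [Fact p.Prime] :
    ∑ t : ZMod p, t ^ (p - 1) = -1 := by
  have hp2 := (Fact.out : p.Prime).two_le
  have hp1 : p - 1 ≠ 0 := by omega
  rw [← Finset.sum_erase_add _ _ (Finset.mem_univ (0 : ZMod p)),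
    zero_pow hp1, add_zero,
    Finset.sum_congr rfl (fun t ht => ZMod.pow_card_sub_one_eq_one (Finset.mem_erase.mp ht).1),
    Finset.sum_const, Finset.card_erase_of_mem (Finset.mem_univ _), Finset.card_univ,
    ZMod.card, nsmul_eq_mul, mul_one, Nat.cast_sub (by omega), Nat.cast_one,
    ZMod.natCast_self, zero_sub]

lemma sumT (p n : ℕ) [Fact p.Prime] (ν : Matrix (Fin n) (Fin n) (ZMod p)) :
    ∑ x : Fin n → ZMod p, ∏ k, (∑ l, ν l k * x l) ^ (p - 1)
      = (-1 : ZMod p) ^ n * ν.det ^ (p - 1) := by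
  have hp2 := (Fact.out : p.Prime).two_le
  have hp1 : p - 1 ≠ 0 := by omega
  have key : ∀ (x : Fin n → ZMod p) k, (∑ l, ν l k * x l) = (Matrix.vecMul x ν) k := by
    intro x k
    simp [Matrix.vecMul, dotProduct, mul_comm]
  simp_rw [key]
  by_cases hdet : ν.det = 0
  · obtain ⟨z, hz, hzν⟩ := Matrix.exists_vecMul_eq_zero_iff.mpr hdet
    obtain ⟨i, hi⟩ := Function.ne_iff.mp hz
    simp only [Pi.zero_apply] at hi
    let e : ({x : Fin n → ZMod p // x i = 0} × ZMod p) ≃ (Fin n → ZMod p) :=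
      { toFun := fun wc => wc.1.1 + wc.2 • z
        invFun := fun x => (⟨x - (x i * (z i)⁻¹) • z, by
          simp [mul_assoc, inv_mul_cancel₀ hi]⟩, x i * (z i)⁻¹)
        left_inv := by
          rintro ⟨⟨w, hw⟩, c⟩
          have h1 : (w + c • z) i = c * z i := by simp [hw]
          ext
          · simp only [h1]
            rw [mul_assoc, mul_inv_cancel₀ hi, mul_one]
            simp
          · simp only [h1]
            rw [mul_assoc, mul_inv_cancel₀ hi, mul_one]
        right_inv := by
          intro x
          simp }
    rw [← e.sum_comp]
    have : ∀ wc : ({x : Fin n → ZMod p // x i = 0} × ZMod p),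
        ∏ k, (Matrix.vecMul (e wc) ν) k ^ (p - 1)
          = ∏ k, (Matrix.vecMul wc.1.1 ν) k ^ (p - 1) := by
      rintro ⟨⟨w, hw⟩, c⟩
      simp only [e, Equiv.coe_fn_mk, Matrix.add_vecMul, Matrix.smul_vecMul, hzν, smul_zero,
        add_zero]
    rw [Finset.sum_congr rfl fun wc _ => this wc]
    rw [Fintype.sum_prod_type_right]
    simp [ZMod.card, hdet, zero_pow hp1]
  · have hb : Function.Bijective (fun x : Fin n → ZMod p => Matrix.vecMul x ν) := by
      have hinj : Function.Injective (fun x : Fin n → ZMod p => Matrix.vecMul x ν) :=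
        Matrix.vecMul_injective_iff_isUnit.mpr
          ((Matrix.isUnit_iff_isUnit_det ν).mpr (isUnit_iff_ne_zero.mpr hdet))
      exact Finite.injective_iff_bijective.mp hinj
    rw [Function.Bijective.sum_comp hb (fun y => ∏ k, y k ^ (p - 1))]
    have : ∑ y : Fin n → ZMod p, ∏ k, y k ^ (p - 1)
        = ∏ _k : Fin n, ∑ t : ZMod p, t ^ (p - 1) := by
      rw [Finset.prod_univ_sum]
      rw [Fintype.piFinset_univ]
    rw [this, ZMod.pow_card_sub_one_eq_one hdet, mul_one]
    simp [sum_pow_card_sub_one p]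

lemma partA (p n : ℕ) [Fact p.Prime] (ν : Matrix (Fin n) (Fin n) (ZMod p)) :
    ∑ x : Fin n → ZMod p, ∏ k, (∑ l, ν l k * x l) ^ (p - 1)
      = (-1 : ZMod p) ^ n * xi p n ν := by
  have hp2 := (Fact.out : p.Prime).two_le
  have hp1 : p - 1 ≠ 0 := by omega
  set P := Fintype.piFinset fun _ : Fin n => piAntidiag (univ : Finset (Fin n)) (p - 1) with hP
  -- expand each factor by the multinomial theorem
  have exp1 : ∀ x : Fin n → ZMod p,
      ∏ k, (∑ l, ν l k * x l) ^ (p - 1)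
        = ∑ a ∈ P, ∏ k, ((Nat.multinomial univ (a k) : ZMod p) *
            ∏ l, (ν l k * x l) ^ (a k l)) := by
    intro x
    calc ∏ k, (∑ l, ν l k * x l) ^ (p - 1)
        = ∏ k, ∑ c ∈ piAntidiag (univ : Finset (Fin n)) (p - 1),
            ((Nat.multinomial univ c : ZMod p) * ∏ l, (ν l k * x l) ^ (c l)) :=
          Finset.prod_congr rfl fun k _ =>
            Finset.sum_pow_eq_sum_piAntidiag univ (fun l => ν l k * x l) (p - 1)
      _ = _ := Finset.prod_univ_sum (fun _ : Fin n => piAntidiag (univ : Finset (Fin n)) (p - 1))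
            (fun k c => (Nat.multinomial univ c : ZMod p) * ∏ l, (ν l k * x l) ^ (c l))
  simp_rw [exp1]
  rw [Finset.sum_comm]
  -- rearrange the inner sum over x
  have exp2 : ∀ a : Fin n → Fin n → ℕ,
      ∑ x : Fin n → ZMod p, ∏ k, ((Nat.multinomial univ (a k) : ZMod p) *
          ∏ l, (ν l k * x l) ^ (a k l))
        = ((∏ k, (Nat.multinomial univ (a k) : ZMod p)) *
            ∏ k, ∏ l, (ν l k) ^ (a k l)) *
          ∏ l, ∑ t : ZMod p, t ^ (∑ k, a k l) := by
    intro a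
    have h1 : ∀ x : Fin n → ZMod p,
        ∏ k, ((Nat.multinomial univ (a k) : ZMod p) * ∏ l, (ν l k * x l) ^ (a k l))
          = ((∏ k, (Nat.multinomial univ (a k) : ZMod p)) *
              ∏ k, ∏ l, (ν l k) ^ (a k l)) * ∏ l, (x l) ^ (∑ k, a k l) := by
      intro x
      rw [Finset.prod_mul_distrib]
      simp_rw [mul_pow, Finset.prod_mul_distrib]
      rw [mul_assoc]
      congr 1
      congr 1
      rw [Finset.prod_comm]
      exact Finset.prod_congr rfl fun l _ => (Finset.prod_pow_eq_pow_sum univ (fun k => a k l) _)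
    simp_rw [h1]
    rw [← Finset.mul_sum]
    congr 1
    rw [Finset.prod_univ_sum, Fintype.piFinset_univ]
  simp_rw [exp2]
  -- evaluate the power sums
  have hSval : ∀ a ∈ P,
      ∏ l, ∑ t : ZMod p, t ^ (∑ k, a k l)
        = if (∀ l, ∑ k, a k l = p - 1) then (-1 : ZMod p) ^ n else 0 := by
    intro a ha
    rw [Fintype.mem_piFinset] at ha
    have hrow : ∀ k, ∑ l, a k l = p - 1 := fun k => ((mem_piAntidiag).mp (ha k)).1
    split_ifs with h
    · rw [Finset.prod_congr rfl fun l _ => by rw [h l]]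
      simp [sum_pow_card_sub_one p]
    · push_neg at h
      obtain ⟨l₀, hl₀⟩ := h
      have hlt : ∃ l, ∑ k, a k l < p - 1 := by
        by_contra hc
        push_neg at hc
        have hsum : ∑ l, ∑ k, a k l = n * (p - 1) := by
          rw [Finset.sum_comm]
          simp [hrow, Finset.sum_const, mul_comm]
        have : ∑ l : Fin n, (p - 1) < ∑ l : Fin n, ∑ k, a k l :=
          Finset.sum_lt_sum (fun l _ => hc l) ⟨l₀, Finset.mem_univ _, lt_of_le_of_ne (hc l₀) (Ne.symm hl₀)⟩
        simp only [Finset.sum_const, Finset.card_univ, Fintype.card_fin, smul_eq_mul, hsum] at this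
        omega
      obtain ⟨l₁, hl₁⟩ := hlt
      apply Finset.prod_eq_zero (Finset.mem_univ l₁)
      have := FiniteField.sum_pow_lt_card_sub_one (K := ZMod p) (∑ k, a k l₁)
        (by rw [ZMod.card]; exact hl₁)
      exact this
  rw [Finset.sum_congr rfl fun a ha => by rw [hSval a ha]]
  have step : ∑ a ∈ P,
      ((∏ k, (Nat.multinomial univ (a k) : ZMod p)) * ∏ k, ∏ l, (ν l k) ^ (a k l)) *
        (if (∀ l, ∑ k, a k l = p - 1) then (-1 : ZMod p) ^ n else 0)
      = ∑ a ∈ P.filter (fun a => ∀ l, ∑ k, a k l = p - 1),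
          ((∏ k, (Nat.multinomial univ (a k) : ZMod p)) * ∏ k, ∏ l, (ν l k) ^ (a k l)) *
            (-1 : ZMod p) ^ n := by
    rw [Finset.sum_filter]
    exact Finset.sum_congr rfl fun a _ => by split_ifs <;> simp
  rw [step]
  simp_rw [mul_comm _ ((-1 : ZMod p) ^ n), ← Finset.mul_sum]
  congr 1
  -- transpose bijection
  rw [xi]
  refine Finset.sum_nbij' (fun a => fun l k => a k l) (fun a => fun l k => a k l) ?_ ?_ ?_ ?_ ?_
  · intro a ha
    rw [Finset.mem_filter] at ha
    obtain ⟨haP, hcol⟩ := ha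
    rw [Fintype.mem_piFinset] at haP
    have hrow : ∀ k, ∑ l, a k l = p - 1 := fun k => ((mem_piAntidiag).mp (haP k)).1
    rw [Finset.mem_filter]
    constructor
    · rw [Fintype.mem_piFinset]
      intro l
      rw [Fintype.mem_piFinset]
      intro k
      rw [Finset.mem_range]
      show a k l < p
      have h1 : a k l ≤ ∑ l', a k l' :=
        Finset.single_le_sum (fun _ _ => Nat.zero_le _) (Finset.mem_univ l)
      have h2 := hrow k
      omega
    · exact ⟨fun k => hcol k, fun l => hrow l⟩
  · intro b hb
    rw [Finset.mem_filter] at hb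
    obtain ⟨_, hb1, hb2⟩ := hb
    rw [Finset.mem_filter]
    constructor
    · rw [Fintype.mem_piFinset]
      intro k
      rw [mem_piAntidiag]
      exact ⟨hb2 k, fun i _ => Finset.mem_univ i⟩
    · intro l
      exact hb1 l
  · intro a _
    rfl
  · intro a _
    rfl
  · intro a _
    push_cast
    rfl

section DegreeBounds

variable {p n : ℕ} [Fact p.Prime]

noncomputable abbrev genM (p n : ℕ) : Matrix (Fin n) (Fin n) (MvPolynomial (Fin n × Fin n) (ZMod p)) :=
  Matrix.of fun l k => MvPolynomial.X (l, k)

lemma degreeOf_xi_genM (i : Fin n × Fin n) :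
    MvPolynomial.degreeOf i (xi p n (genM p n)) ≤ p - 1 := by
  rw [xi]
  refine le_trans (MvPolynomial.degreeOf_sum_le _ _ _) (Finset.sup_le fun a ha => ?_)
  rw [Finset.mem_filter] at ha
  obtain ⟨-, hrow, hcol⟩ := ha
  refine le_trans (MvPolynomial.degreeOf_mul_le _ _ _) ?_
  have hc : MvPolynomial.degreeOf i
      ((↑(∏ k, Nat.multinomial univ fun l => a l k) : MvPolynomial (Fin n × Fin n) (ZMod p)))
        = 0 := by
    rw [← map_natCast (MvPolynomial.C : ZMod p →+* MvPolynomial (Fin n × Fin n) (ZMod p))]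
    exact MvPolynomial.degreeOf_C _ _
  rw [hc, zero_add]
  refine le_trans (MvPolynomial.degreeOf_prod_le _ _ _) ?_
  have h1 : ∀ k, MvPolynomial.degreeOf i (∏ l, (genM p n l k) ^ (a l k))
      ≤ ∑ l, (if i = (l, k) then a l k else 0) := by
    intro k
    refine le_trans (MvPolynomial.degreeOf_prod_le _ _ _) (Finset.sum_le_sum fun l _ => ?_)
    refine le_trans (MvPolynomial.degreeOf_pow_le _ _ _) ?_
    rw [genM, Matrix.of_apply, MvPolynomial.degreeOf_X]
    split_ifs <;> simp
  refine le_trans (Finset.sum_le_sum fun k _ => h1 k) ?_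
  have h2 : ∑ k, ∑ l, (if i = (l, k) then a l k else 0) = a i.1 i.2 := by
    rw [Finset.sum_comm]
    rw [show (∑ l : Fin n, ∑ k : Fin n, if i = (l, k) then a l k else 0) =
        ∑ q : Fin n × Fin n, (if i = q then a q.1 q.2 else 0) from
      (Fintype.sum_prod_type (fun q : Fin n × Fin n => if i = q then a q.1 q.2 else 0)).symm]
    simp
  rw [h2]
  have := hrow i.1
  have h3 : a i.1 i.2 ≤ ∑ l, a i.1 l :=
    Finset.single_le_sum (fun _ _ => Nat.zero_le _) (Finset.mem_univ i.2)
  omega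

lemma degreeOf_det_genM (i : Fin n × Fin n) :
    MvPolynomial.degreeOf i ((genM p n).det) ≤ 1 := by
  rw [Matrix.det_apply]
  refine le_trans (MvPolynomial.degreeOf_sum_le _ _ _) (Finset.sup_le fun σ _ => ?_)
  have hsmul : (Equiv.Perm.sign σ : ℤˣ) • (∏ k, genM p n (σ k) k)
      = ((Equiv.Perm.sign σ : ℤ) : MvPolynomial (Fin n × Fin n) (ZMod p)) *
          ∏ k, genM p n (σ k) k := by
    rw [Units.smul_def, zsmul_eq_mul]
  rw [hsmul]
  refine le_trans (MvPolynomial.degreeOf_mul_le _ _ _) ?_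
  have hc : MvPolynomial.degreeOf i
      (((Equiv.Perm.sign σ : ℤ) : MvPolynomial (Fin n × Fin n) (ZMod p))) = 0 := by
    rw [← map_intCast (MvPolynomial.C : ZMod p →+* MvPolynomial (Fin n × Fin n) (ZMod p))]
    exact MvPolynomial.degreeOf_C _ _
  rw [hc, zero_add]
  refine le_trans (MvPolynomial.degreeOf_prod_le _ _ _) ?_
  have h1 : ∀ k, MvPolynomial.degreeOf i (genM p n (σ k) k)
      ≤ if k = i.2 then 1 else 0 := by
    intro k
    rw [genM, Matrix.of_apply, MvPolynomial.degreeOf_X]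
    split_ifs with h h'
    · exact le_refl _
    · exact absurd (congrArg Prod.snd h).symm h'
    · exact Nat.zero_le _
    · exact le_refl _
  refine le_trans (Finset.sum_le_sum fun k _ => h1 k) ?_
  simp

end DegreeBounds

lemma xi_zmod (p n : ℕ) [Fact p.Prime] (ν : Matrix (Fin n) (Fin n) (ZMod p)) :
    xi p n ν = ν.det ^ (p - 1) := by
  haveI : Fact (1 < p) := ⟨(Fact.out : p.Prime).one_lt⟩
  have h := (partA p n ν).symm.trans (sumT p n ν)
  exact mul_left_cancel₀ (pow_ne_zero _ (neg_ne_zero.mpr (one_ne_zero))) h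

lemma xi_genM_eq (p n : ℕ) [Fact p.Prime] :
    xi p n (genM p n) = (genM p n).det ^ (p - 1) := by
  have hcard : Fintype.card (ZMod p) - 1 = p - 1 := by rw [ZMod.card]
  rw [← sub_eq_zero]
  apply MvPolynomial.eq_zero_of_eval_eq_zero
  · intro v
    rw [map_sub, map_pow, RingHom.map_det, RingHom.mapMatrix_apply, xi_map p n (MvPolynomial.eval v) (genM p n)]
    have hM : (genM p n).map (MvPolynomial.eval v) = Matrix.of fun l k => v (l, k) := by
      ext l k
      simp [Matrix.map_apply]
    rw [hM, xi_zmod p n]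
    exact sub_self _
  · rw [hcard]
    apply Submodule.sub_mem
    · rw [MvPolynomial.mem_restrictDegree]
      intro s hs i
      exact MvPolynomial.degreeOf_le_iff.mp (degreeOf_xi_genM i) s hs
    · rw [MvPolynomial.mem_restrictDegree]
      intro s hs i
      refine MvPolynomial.degreeOf_le_iff.mp ?_ s hs
      refine le_trans (MvPolynomial.degreeOf_pow_le _ _ _) ?_
      have := degreeOf_det_genM (p := p) (n := n) i
      calc (p - 1) * MvPolynomial.degreeOf i (genM p n).det ≤ (p - 1) * 1 :=
            Nat.mul_le_mul_left _ this
        _ = p - 1 := mul_one _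

/-- For a prime `p` and a matrix `μ` over a commutative ring of characteristic `p`,
`ξ(μ) = (det μ) ^ (p - 1)`. -/
theorem xi_eq_det_pow (p : ℕ) (hp : p.Prime) (R : Type*) [CommRing R] [CharP R p]
    (n : ℕ) (μ : Matrix (Fin n) (Fin n) R) :
    xi p n μ = μ.det ^ (p - 1) := by
  haveI := Fact.mk hp
  let φ : MvPolynomial (Fin n × Fin n) (ZMod p) →+* R :=
    MvPolynomial.eval₂Hom (ZMod.castHom dvd_rfl R) fun q => μ q.1 q.2
  have hM : (genM p n).map φ = μ := by
    ext l k
    simp [φ, Matrix.map_apply]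
  calc xi p n μ = xi p n ((genM p n).map φ) := by rw [hM]
    _ = φ (xi p n (genM p n)) := (xi_map p n φ (genM p n)).symm
    _ = φ ((genM p n).det ^ (p - 1)) := by rw [xi_genM_eq]
    _ = ((genM p n).map φ).det ^ (p - 1) := by rw [map_pow, RingHom.map_det, RingHom.mapMatrix_apply]
    _ = μ.det ^ (p - 1) := by rw [hM]
end

section
/- Let p be a prime, R a commutative ring with CharP R p, n : ℕ, and μ : Matrix (Fin n) (Fin n) R. In MvPolynomial (Fin n) R, the coefficient of the monomial ∏_l (X l)^(p−1) (i.e., the coefficient at the finitely supported exponent function sending every l to p−1) in the product ∏_{k} (∑_l MvPolynomial.C (μ l k) * X l)^(p−1) equals (det μ)^(p−1). -/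
open MvPolynomial


section Aux

open Finset


lemma zmod_sum_pow (p : ℕ) [Fact p.Prime] (e : ℕ) :
    ∑ x : ZMod p, x ^ e = if e ≠ 0 ∧ (p - 1) ∣ e then (-1 : ZMod p) else 0 := by
  classical
  rcases eq_or_ne e 0 with rfl | he
  · simp [Finset.card_univ, ZMod.card, ZMod.natCast_self]
  · let φ : (ZMod p)ˣ ↪ ZMod p := ⟨fun x ↦ x, fun _ _ h => Units.ext h⟩
    have hmap : univ.map φ = univ \ {0} := by
      ext x
      simp only [mem_map, mem_univ, Function.Embedding.coeFn_mk, true_and, mem_sdiff,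
        mem_singleton, φ]; exact isUnit_iff_ne_zero
    calc
      ∑ x : ZMod p, x ^ e = ∑ x ∈ univ \ {(0 : ZMod p)}, x ^ e := by
        rw [← Finset.sum_sdiff (Finset.subset_univ {(0 : ZMod p)}), Finset.sum_singleton,
          zero_pow he, add_zero]
      _ = ∑ x : (ZMod p)ˣ, (x : ZMod p) ^ e := by rw [← hmap, Finset.sum_map]; rfl
      _ = if e ≠ 0 ∧ (p - 1) ∣ e then (-1 : ZMod p) else 0 := by
        rw [FiniteField.sum_pow_units, ZMod.card]
        simp [he]

lemma sum_eval_eq (p : ℕ) [Fact p.Prime] (n : ℕ) (f : MvPolynomial (Fin n) (ZMod p))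
    (hf : f.totalDegree ≤ n * (p - 1)) :
    ∑ x : Fin n → ZMod p, eval x f
      = (-1) ^ n * coeff (Finsupp.equivFunOnFinite.symm fun _ : Fin n => p - 1) f := by
  classical
  set m : (Fin n) →₀ ℕ := Finsupp.equivFunOnFinite.symm fun _ : Fin n => p - 1 with hm
  have hmi : ∀ i, m i = p - 1 := fun i => rfl
  have hp1 : p - 1 ≠ 0 := Nat.sub_ne_zero_of_lt (Fact.out : p.Prime).one_lt
  have key : ∀ d ∈ f.support,
      (∏ i : Fin n, ∑ t : ZMod p, t ^ d i) = if d = m then (-1 : ZMod p) ^ n else 0 := by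
    intro d hd
    by_cases hdm : d = m
    · rw [if_pos hdm]
      have h1 : ∀ i : Fin n, (∑ t : ZMod p, t ^ (d i)) = -1 := by
        intro i
        rw [zmod_sum_pow, if_pos ⟨by rw [hdm, hmi]; exact hp1, by rw [hdm, hmi]⟩]
      simp [h1]
    · rw [if_neg hdm]
      by_cases hall : ∀ i, d i ≠ 0 ∧ (p - 1) ∣ d i
      · exfalso
        apply hdm
        have h1 : ∀ i, p - 1 ≤ d i := fun i =>
          Nat.le_of_dvd (Nat.pos_of_ne_zero (hall i).1) (hall i).2
        have h2 : (∑ i : Fin n, d i) ≤ n * (p - 1) := by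
          refine le_trans (le_of_eq ?_) (le_trans (le_totalDegree hd) hf)
          rw [Finsupp.sum_fintype]
          exact fun _ => rfl
        have h3 : (∑ _i : Fin n, (p - 1)) = ∑ i : Fin n, d i := by
          have hle : (∑ _i : Fin n, (p - 1)) ≤ ∑ i : Fin n, d i :=
            Finset.sum_le_sum fun i _ => h1 i
          have hc : (∑ _i : Fin n, (p - 1)) = n * (p - 1) := by
            simp [Finset.sum_const, mul_comm]
          omega
        have h4 := (Finset.sum_eq_sum_iff_of_le (fun i _ => h1 i)).mp h3
        ext i
        rw [hmi]
        exact (h4 i (mem_univ i)).symm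
      · obtain ⟨i, hi⟩ := not_forall.mp hall
        refine Finset.prod_eq_zero (mem_univ i) ?_
        rw [zmod_sum_pow, if_neg hi]
  calc
    ∑ x : Fin n → ZMod p, eval x f
        = ∑ x : Fin n → ZMod p, ∑ d ∈ f.support, coeff d f * ∏ i, x i ^ d i := by
          simp only [eval_eq']
    _ = ∑ d ∈ f.support, ∑ x : Fin n → ZMod p, coeff d f * ∏ i, x i ^ d i := Finset.sum_comm
    _ = ∑ d ∈ f.support, coeff d f * ∑ x : Fin n → ZMod p, ∏ i, x i ^ d i := by
          simp only [Finset.mul_sum]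
    _ = ∑ d ∈ f.support, coeff d f * ∏ i : Fin n, ∑ t : ZMod p, t ^ d i := by
          refine Finset.sum_congr rfl fun d _ => ?_
          rw [Finset.prod_univ_sum, Fintype.piFinset_univ]
    _ = ∑ d ∈ f.support, coeff d f * if d = m then (-1 : ZMod p) ^ n else 0 := by
          refine Finset.sum_congr rfl fun d hd => by rw [key d hd]
    _ = (-1) ^ n * coeff m f := by
          simp only [mul_ite, mul_zero, Finset.sum_ite_eq' f.support m, mul_comm]
          split_ifs with h
          · rfl
          · rw [MvPolynomial.notMem_support_iff.mp h, mul_zero]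

lemma sum_eval_prod_eq (p : ℕ) [Fact p.Prime] (n : ℕ) (μ : Matrix (Fin n) (Fin n) (ZMod p)) :
    ∑ x : Fin n → ZMod p, ∏ k : Fin n, (∑ l : Fin n, μ l k * x l) ^ (p - 1)
      = (-1) ^ n * μ.det ^ (p - 1) := by
  classical
  have hp1 : p - 1 ≠ 0 := Nat.sub_ne_zero_of_lt (Fact.out : p.Prime).one_lt
  have hvm : ∀ (x : Fin n → ZMod p) (k : Fin n),
      (∑ l : Fin n, μ l k * x l) = Matrix.vecMul x μ k := by
    intro x k
    simp [Matrix.vecMul, dotProduct, mul_comm]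
  simp only [hvm]
  by_cases hdet : μ.det = 0
  · rw [hdet, zero_pow hp1, mul_zero]
    -- each term is an indicator
    have hterm : ∀ x : Fin n → ZMod p,
        (∏ k : Fin n, (Matrix.vecMul x μ k) ^ (p - 1))
          = if ∀ k, Matrix.vecMul x μ k ≠ 0 then 1 else 0 := by
      intro x
      split_ifs with h
      · exact Finset.prod_eq_one fun k _ => ZMod.pow_card_sub_one_eq_one (h k)
      · push_neg at h
        obtain ⟨k, hk⟩ := h
        exact Finset.prod_eq_zero (mem_univ k) (by rw [hk, zero_pow hp1])
    simp only [hterm]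
    rw [Finset.sum_boole]
    -- now show p divides the cardinality
    obtain ⟨x₀, hx₀, hx₀v⟩ := Matrix.exists_vecMul_eq_zero_iff.mpr hdet
    set T := {x : Fin n → ZMod p // ∀ k, Matrix.vecMul x μ k ≠ 0} with hT
    have hinv : ∀ (c : ZMod p) (x : Fin n → ZMod p) (k : Fin n),
        Matrix.vecMul (x + c • x₀) μ k = Matrix.vecMul x μ k := by
      intro c x k
      rw [Matrix.add_vecMul, Matrix.smul_vecMul, hx₀v]
      simp
    letI : MulAction (Multiplicative (ZMod p)) T :=
      { smul := fun c x => ⟨x.1 + (Multiplicative.toAdd c) • x₀,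
          fun k => by rw [hinv]; exact x.2 k⟩
        one_smul := fun x => by
          apply Subtype.ext
          show x.1 + (Multiplicative.toAdd 1 : ZMod p) • x₀ = x.1
          simp
        mul_smul := fun c d x => by
          apply Subtype.ext
          show x.1 + (Multiplicative.toAdd (c * d) : ZMod p) • x₀
            = (x.1 + (Multiplicative.toAdd d : ZMod p) • x₀)
              + (Multiplicative.toAdd c : ZMod p) • x₀
          rw [toAdd_mul, add_smul]
          ring_nf }
    have hpg : IsPGroup p (Multiplicative (ZMod p)) :=
      IsPGroup.of_card (n := 1) (by simp [Nat.card_eq_fintype_card, ZMod.card, pow_one])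
    have hempty : IsEmpty (MulAction.fixedPoints (Multiplicative (ZMod p)) T) := by
      constructor
      rintro ⟨⟨x, hx⟩, hfix⟩
      have h2 := MulAction.mem_fixedPoints.mp hfix (Multiplicative.ofAdd (1 : ZMod p))
      have h1 : x + (1 : ZMod p) • x₀ = x := congrArg Subtype.val h2
      apply hx₀
      rw [one_smul] at h1
      exact add_eq_left.mp h1
    have hmod := hpg.card_modEq_card_fixedPoints T
    have h0 : Nat.card (MulAction.fixedPoints (Multiplicative (ZMod p)) T) = 0 :=
      @Nat.card_of_isEmpty _ hempty
    rw [h0] at hmod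
    have hdvd : p ∣ Nat.card T := (Nat.modEq_zero_iff_dvd).mp hmod
    have hcard : Nat.card T = (Finset.filter (fun x : Fin n → ZMod p =>
        ∀ k, Matrix.vecMul x μ k ≠ 0) Finset.univ).card := by
      rw [Nat.card_eq_fintype_card, Fintype.card_subtype]
    rw [hcard] at hdvd
    exact_mod_cast (ZMod.natCast_eq_zero_iff _ p).mpr hdvd
  · -- invertible case
    have hb : Function.Bijective (fun x : Fin n → ZMod p => Matrix.vecMul x μ) := by
      refine Function.bijective_iff_has_inverse.mpr
        ⟨fun y => Matrix.vecMul y μ⁻¹, fun x => ?_, fun y => ?_⟩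
      · show Matrix.vecMul (Matrix.vecMul x μ) μ⁻¹ = x
        rw [Matrix.vecMul_vecMul, Matrix.mul_nonsing_inv _ (isUnit_iff_ne_zero.mpr hdet),
          Matrix.vecMul_one]
      · show Matrix.vecMul (Matrix.vecMul y μ⁻¹) μ = y
        rw [Matrix.vecMul_vecMul, Matrix.nonsing_inv_mul _ (isUnit_iff_ne_zero.mpr hdet),
          Matrix.vecMul_one]
    calc
      ∑ x : Fin n → ZMod p, ∏ k, (Matrix.vecMul x μ k) ^ (p - 1)
          = ∑ y : Fin n → ZMod p, ∏ k, (y k) ^ (p - 1) := hb.sum_comp (fun y => ∏ k, (y k) ^ (p - 1))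
      _ = ∏ _k : Fin n, ∑ t : ZMod p, t ^ (p - 1) := by
          rw [Finset.prod_univ_sum (fun _ : Fin n => (Finset.univ : Finset (ZMod p)))
            (fun _ t => t ^ (p - 1)), Fintype.piFinset_univ]
      _ = (-1) ^ n := by
          have h5 : (∑ t : ZMod p, t ^ (p - 1)) = -1 := by
            rw [zmod_sum_pow, if_pos ⟨hp1, dvd_rfl⟩]
          simp [h5]
      _ = (-1) ^ n * μ.det ^ (p - 1) := by
          rw [ZMod.pow_card_sub_one_eq_one hdet, mul_one]

lemma coeff_zmod (p : ℕ) [Fact p.Prime] (n : ℕ) (μ : Matrix (Fin n) (Fin n) (ZMod p)) :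
    coeff (Finsupp.equivFunOnFinite.symm fun _ : Fin n => p - 1)
        (∏ k : Fin n, (∑ l : Fin n, C (μ l k) * X l) ^ (p - 1))
      = μ.det ^ (p - 1) := by
  classical
  set P : MvPolynomial (Fin n) (ZMod p) :=
    ∏ k : Fin n, (∑ l : Fin n, C (μ l k) * X l) ^ (p - 1) with hP
  have htd : P.totalDegree ≤ n * (p - 1) := by
    refine le_trans (totalDegree_finset_prod _ _) ?_
    have h1 : ∀ k : Fin n, ((∑ l : Fin n, C (μ l k) * X l) ^ (p - 1)).totalDegree ≤ p - 1 := by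
      intro k
      refine le_trans (totalDegree_pow _ _) ?_
      have h2 : (∑ l : Fin n, C (μ l k) * X l).totalDegree ≤ 1 := by
        refine le_trans (totalDegree_finset_sum _ _) (Finset.sup_le fun l _ => ?_)
        refine le_trans (totalDegree_mul _ _) ?_
        rw [totalDegree_C, totalDegree_X]
      calc (p - 1) * (∑ l : Fin n, C (μ l k) * X l).totalDegree ≤ (p - 1) * 1 :=
            Nat.mul_le_mul_left _ h2
        _ = p - 1 := mul_one _
    refine le_trans (Finset.sum_le_sum fun k _ => h1 k) ?_
    simp [Finset.sum_const, mul_comm]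
  have heval : ∀ x : Fin n → ZMod p,
      eval x P = ∏ k : Fin n, (∑ l : Fin n, μ l k * x l) ^ (p - 1) := by
    intro x
    simp [hP]
  have := sum_eval_eq p n P htd
  rw [funext fun x => heval x] at this
  rw [sum_eval_prod_eq p n μ] at this
  have hne : ((-1 : ZMod p) ^ n) ≠ 0 := pow_ne_zero _ (neg_ne_zero.mpr one_ne_zero)
  exact (mul_left_cancel₀ hne this).symm

section DegreeLemmas

variable {σ R ι τ : Type*} [CommSemiring R]


lemma degreeOf_one' (i : σ) : degreeOf i (1 : MvPolynomial σ R) = 0 := by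
  rw [← C_1, degreeOf_C]

lemma degreeOf_sum_le' (i : σ) (s : Finset ι) (f : ι → MvPolynomial σ R) (b : ℕ)
    (h : ∀ k ∈ s, degreeOf i (f k) ≤ b) : degreeOf i (∑ k ∈ s, f k) ≤ b := by
  classical
  induction s using Finset.induction_on with
  | empty => simp
  | insert a s' hx ih =>
    rw [Finset.sum_insert hx]
    refine le_trans (degreeOf_add_le _ _ _) (sup_le (h a (mem_insert_self a s'))
      (ih fun k hk => h k (mem_insert_of_mem hk)))

lemma degreeOf_prod_le' (i : σ) (s : Finset ι) (f : ι → MvPolynomial σ R) (b : ι → ℕ)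
    (h : ∀ k ∈ s, degreeOf i (f k) ≤ b k) :
    degreeOf i (∏ k ∈ s, f k) ≤ ∑ k ∈ s, b k := by
  classical
  induction s using Finset.induction_on with
  | empty => simp [degreeOf_one']
  | insert a s' hx ih =>
    rw [Finset.prod_insert hx, Finset.sum_insert hx]
    exact le_trans (degreeOf_mul_le _ _ _)
      (add_le_add (h a (mem_insert_self a s')) (ih fun k hk => h k (mem_insert_of_mem hk)))

lemma degreeOf_pow_le' (i : σ) (f : MvPolynomial σ R) (e c : ℕ) (h : degreeOf i f ≤ c) :
    degreeOf i (f ^ e) ≤ e * c := by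
  have := degreeOf_prod_le' i (Finset.range e) (fun _ => f) (fun _ => c) fun k _ => h
  simpa using this

/-- coefficients of a product have controlled degree -/
lemma degreeOf_coeff_prod_le (i : σ) (s : Finset ι) (g : ι → MvPolynomial τ (MvPolynomial σ R))
    (c : ι → ℕ) (h : ∀ k ∈ s, ∀ d, degreeOf i (coeff d (g k)) ≤ c k) (d : τ →₀ ℕ) :
    degreeOf i (coeff d (∏ k ∈ s, g k)) ≤ ∑ k ∈ s, c k := by
  classical
  induction s using Finset.induction_on generalizing d with
  | empty =>
    simp only [Finset.prod_empty, Finset.sum_empty]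
    rcases eq_or_ne d 0 with rfl | hd
    · rw [coeff_zero_one]
      simp [degreeOf_one']
    · rw [coeff_one, if_neg (fun h' => hd h'.symm)]
      simp
  | insert a s' hx ih =>
    rw [Finset.prod_insert hx, Finset.sum_insert hx, coeff_mul]
    refine degreeOf_sum_le' _ _ _ _ fun q hq => ?_
    refine le_trans (degreeOf_mul_le _ _ _) (add_le_add (h a (mem_insert_self a s') _)
      (ih (fun k hk d' => h k (mem_insert_of_mem hk) d') _))

end DegreeLemmas


lemma coeff_generic (p : ℕ) [Fact p.Prime] (n : ℕ) :
    coeff (Finsupp.equivFunOnFinite.symm fun _ : Fin n => p - 1)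
        (∏ k : Fin n, (∑ l : Fin n,
          (C (X (l, k)) : MvPolynomial (Fin n) (MvPolynomial (Fin n × Fin n) (ZMod p)))
            * X l) ^ (p - 1))
      = (Matrix.det fun l k : Fin n => (X (l, k) : MvPolynomial (Fin n × Fin n) (ZMod p)))
          ^ (p - 1) := by
  classical
  set S := MvPolynomial (Fin n × Fin n) (ZMod p)
  set Y : Matrix (Fin n) (Fin n) S := fun l k => X (l, k) with hY
  set m : (Fin n) →₀ ℕ := Finsupp.equivFunOnFinite.symm fun _ : Fin n => p - 1 with hm
  set B : MvPolynomial (Fin n) S :=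
    ∏ k : Fin n, (∑ l : Fin n, MvPolynomial.C (Y l k) * MvPolynomial.X l) ^ (p - 1) with hB
  set F : S := coeff m B - Y.det ^ (p - 1) with hF
  -- degree bound on the determinant
  have hdet1 : ∀ i : Fin n × Fin n, degreeOf i Y.det ≤ 1 := by
    intro i
    rw [Matrix.det_apply']
    refine degreeOf_sum_le' _ _ _ _ fun σ _ => ?_
    refine le_trans (degreeOf_mul_le _ _ _) ?_
    have h1 : degreeOf i ((Equiv.Perm.sign σ : ℤ) : S) = 0 := by
      rw [← map_intCast (MvPolynomial.C : ZMod p →+* S), degreeOf_C]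
    have h2 : degreeOf i (∏ j : Fin n, Y (σ j) j) ≤ 1 := by
      refine le_trans (degreeOf_prod_le' i univ _ (fun j => if j = i.2 then 1 else 0)
        fun j _ => ?_) ?_
      · rw [hY]
        simp only
        rw [degreeOf_X]
        split_ifs with h3 h4 h4
        · exact le_refl 1
        · exact (h4 (by simp [h3])).elim
        · exact Nat.zero_le 1
        · exact le_refl 0
      · rw [Finset.sum_ite_eq' univ i.2 (fun _ => 1), if_pos (mem_univ _)]
    omega
  have hdetp : ∀ i : Fin n × Fin n, degreeOf i (Y.det ^ (p - 1)) ≤ p - 1 := fun i => by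
    simpa using degreeOf_pow_le' i Y.det (p - 1) 1 (hdet1 i)
  -- degree bound on the coefficient
  have hcoeffB : ∀ i : Fin n × Fin n, ∀ d : (Fin n) →₀ ℕ, degreeOf i (coeff d B) ≤ p - 1 := by
    intro i d
    rw [hB]
    have key : ∀ k ∈ (univ : Finset (Fin n)), ∀ d' : (Fin n) →₀ ℕ,
        degreeOf i (coeff d' ((∑ l : Fin n, MvPolynomial.C (Y l k) * MvPolynomial.X l) ^ (p - 1)))
          ≤ (p - 1) * (if k = i.2 then 1 else 0) := by
      intro k _ d'
      have hcL : ∀ d'' : (Fin n) →₀ ℕ,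
          degreeOf i (coeff d'' (∑ l : Fin n, MvPolynomial.C (Y l k) * MvPolynomial.X l))
            ≤ (if k = i.2 then 1 else 0) := by
        intro d''
        rw [MvPolynomial.coeff_sum]
        refine degreeOf_sum_le' _ _ _ _ fun l _ => ?_
        rcases eq_or_ne (Finsupp.single l 1) d'' with h5 | h5
        · rw [coeff_C_mul, coeff_X', if_pos h5, mul_one]
          show degreeOf i (X (l, k)) ≤ _
          rw [degreeOf_X]
          by_cases h6 : i = (l, k)
          · rw [if_pos h6, if_pos (by simp [h6])]
          · rw [if_neg h6]
            exact Nat.zero_le _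
        · rw [coeff_C_mul, coeff_X', if_neg h5, mul_zero, degreeOf_zero]
          exact Nat.zero_le _
      have hpow : ((∑ l : Fin n, MvPolynomial.C (Y l k) * MvPolynomial.X l) ^ (p - 1))
          = ∏ _j ∈ Finset.range (p - 1), (∑ l : Fin n, MvPolynomial.C (Y l k)
            * MvPolynomial.X l) := by
        rw [Finset.prod_const, Finset.card_range]
      rw [hpow]
      have := degreeOf_coeff_prod_le i (Finset.range (p - 1))
        (fun _ => ∑ l : Fin n, MvPolynomial.C (Y l k) * MvPolynomial.X l)
        (fun _ => if k = i.2 then 1 else 0) (fun _ _ d'' => hcL d'') d'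
      simpa [mul_comm] using this
    have := degreeOf_coeff_prod_le i univ
      (fun k => (∑ l : Fin n, MvPolynomial.C (Y l k) * MvPolynomial.X l) ^ (p - 1))
      (fun k => (p - 1) * (if k = i.2 then 1 else 0)) key d
    refine le_trans this (le_of_eq ?_)
    simp only [mul_ite, mul_one, mul_zero]
    rw [Finset.sum_ite_eq' univ i.2 (fun _ => p - 1), if_pos (mem_univ _)]
  -- F vanishes at every point
  have hevalF : ∀ v : (Fin n × Fin n) → ZMod p, eval v F = 0 := by
    intro v
    rw [hF, map_sub]
    have h1 : eval v (coeff m B)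
        = coeff m (MvPolynomial.map (eval v : S →+* ZMod p) B) := by
      rw [MvPolynomial.coeff_map]
    have h2 : MvPolynomial.map (eval v : S →+* ZMod p) B
        = ∏ k : Fin n, (∑ l : Fin n, MvPolynomial.C (v (l, k)) * MvPolynomial.X l) ^ (p - 1) := by
      rw [hB, map_prod]
      refine Finset.prod_congr rfl fun k _ => ?_
      rw [map_pow, map_sum]
      refine congrArg (· ^ (p - 1)) (Finset.sum_congr rfl fun l _ => ?_)
      rw [map_mul, MvPolynomial.map_C, MvPolynomial.map_X, hY]
      simp
    have h3 : eval v (Y.det ^ (p - 1))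
        = (Matrix.det fun l k : Fin n => v (l, k)) ^ (p - 1) := by
      rw [map_pow]
      congr 1
      rw [RingHom.map_det]
      congr 1
      ext l k
      exact (eval_X (l, k) : eval v (X (l, k)) = v (l, k))
    rw [h1, h2, h3, coeff_zmod p n (fun l k => v (l, k)), sub_self]
  -- degree restriction and conclusion
  have hFmem : F ∈ restrictDegree (Fin n × Fin n) (ZMod p) (Fintype.card (ZMod p) - 1) := by
    rw [MvPolynomial.mem_restrictDegree, ZMod.card]
    intro s hs i
    have hsub := MvPolynomial.support_sub (Fin n × Fin n) (coeff m B) (Y.det ^ (p - 1)) (hF ▸ hs)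
    rcases Finset.mem_union.mp hsub with h | h
    · exact MvPolynomial.degreeOf_le_iff.mp (hcoeffB i m) s h
    · exact MvPolynomial.degreeOf_le_iff.mp (hdetp i) s h
  have hF0 : F = 0 := MvPolynomial.eq_zero_of_eval_eq_zero _ _ F hevalF hFmem
  have := sub_eq_zero.mp (hF ▸ hF0)
  simpa [hB, hY, hm] using this

end Aux


/-- For a prime `p` and a matrix `μ` over a commutative ring of characteristic `p`, the
coefficient of the monomial `∏ l, (X l) ^ (p - 1)` in `∏ k, (∑ l, C (μ l k) * X l) ^ (p - 1)`
equals `(det μ) ^ (p - 1)`. -/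
theorem coeff_prod_linear_forms_pow (p : ℕ) (hp : p.Prime) (R : Type*) [CommRing R]
    [CharP R p] (n : ℕ) (μ : Matrix (Fin n) (Fin n) R) :
    MvPolynomial.coeff (Finsupp.equivFunOnFinite.symm fun _ : Fin n => p - 1)
        (∏ k : Fin n, (∑ l : Fin n, MvPolynomial.C (μ l k) * MvPolynomial.X l) ^ (p - 1))
      = μ.det ^ (p - 1) := by
  classical
  haveI : Fact p.Prime := ⟨hp⟩
  set S := MvPolynomial (Fin n × Fin n) (ZMod p)
  let ψ : S →+* R := eval₂Hom (ZMod.castHom dvd_rfl R) (fun q : Fin n × Fin n => μ q.1 q.2)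
  have hψX : ∀ l k : Fin n, ψ (X (l, k)) = μ l k := fun l k => eval₂Hom_X' _ _ _
  have h2 : MvPolynomial.map ψ
      (∏ k : Fin n, (∑ l : Fin n,
        (C (X (l, k)) : MvPolynomial (Fin n) S) * X l) ^ (p - 1))
      = ∏ k : Fin n, (∑ l : Fin n, MvPolynomial.C (μ l k) * MvPolynomial.X l) ^ (p - 1) := by
    rw [map_prod]
    refine Finset.prod_congr rfl fun k _ => ?_
    rw [map_pow, map_sum]
    refine congrArg (· ^ (p - 1)) (Finset.sum_congr rfl fun l _ => ?_)
    rw [map_mul, MvPolynomial.map_C, MvPolynomial.map_X, hψX]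
  rw [← h2, MvPolynomial.coeff_map, coeff_generic p n, map_pow,
    RingHom.map_det ψ (fun l k : Fin n => (X (l, k) : S))]
  congr 2
  ext l k
  exact hψX l k
end

section
/- Let R be a commutative ring, n d : ℕ, and μ : Matrix (Fin n) (Fin n) R. In MvPolynomial (Fin n) R, the coefficient of the monomial ∏_l (X l)^d in ∏_{k} (∑_l MvPolynomial.C (μ l k) * X l)^d equals the sum, over all functions a : Fin n → Fin n → ℕ satisfying (∀ k, ∑_l a k l = d) and (∀ l, ∑_k a k l = d), of ((∏_k Nat.multinomial Finset.univ (fun l => a l k) : ℕ) : R) * ∏_k ∏_l (μ l k)^(a l k). -/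
open MvPolynomial Finset

lemma term_eq_aux (R : Type*) [CommRing R] (n : ℕ) (μ : Matrix (Fin n) (Fin n) R)
    (g : Fin n → Fin n → ℕ) :
    (∏ k : Fin n, (Nat.multinomial Finset.univ (g k) : MvPolynomial (Fin n) R) *
        ∏ l : Fin n, (MvPolynomial.C (μ l k) * MvPolynomial.X l) ^ (g k l))
      = MvPolynomial.C (((∏ k, Nat.multinomial Finset.univ (g k) : ℕ) : R) *
          ∏ k, ∏ l, (μ l k) ^ (g k l)) *
        MvPolynomial.monomial (Finsupp.equivFunOnFinite.symm fun l => ∑ k, g k l) 1 := by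
  have h2 : ∀ k : Fin n, (∏ l : Fin n, (MvPolynomial.X l : MvPolynomial (Fin n) R) ^ g k l)
      = MvPolynomial.monomial (Finsupp.equivFunOnFinite.symm (g k)) 1 := by
    intro k
    rw [MvPolynomial.monomial_eq]
    simp [Finsupp.prod_fintype, Finsupp.coe_equivFunOnFinite_symm]
  have h3 : (Finsupp.equivFunOnFinite.symm fun l => ∑ k, g k l)
      = ∑ k : Fin n, Finsupp.equivFunOnFinite.symm (g k) := by
    ext l; simp [Finsupp.coe_equivFunOnFinite_symm]
  simp only [mul_pow, ← C_pow, Finset.prod_mul_distrib, h2, h3,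
    monomial_sum_one, Nat.cast_prod, ← C_eq_coe_nat]
  rw [← mul_assoc, C_mul]
  simp only [← map_prod]

/-- Over any commutative ring `R`, the coefficient of the monomial `∏ l, (X l) ^ d` in
`∏ k, (∑ l, C (μ l k) * X l) ^ d` equals the sum, over all `a : Fin n → Fin n → ℕ` whose
every row sum and every column sum equals `d` (all such `a` have entries `≤ d`, so the
index set below captures exactly these), of
`(∏ k, multinomial (fun l => a l k)) * ∏ k, ∏ l, (μ l k) ^ (a l k)`. -/
theorem coeff_prod_linear_forms_pow_eq_sum (R : Type*) [CommRing R] (n d : ℕ)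
    (μ : Matrix (Fin n) (Fin n) R) :
    MvPolynomial.coeff (Finsupp.equivFunOnFinite.symm fun _ : Fin n => d)
        (∏ k : Fin n, (∑ l : Fin n, MvPolynomial.C (μ l k) * MvPolynomial.X l) ^ d)
      = ∑ a ∈ Finset.filter
            (fun a : Fin n → Fin n → ℕ =>
              (∀ k, ∑ l, a k l = d) ∧ (∀ l, ∑ k, a k l = d))
            (Fintype.piFinset fun _ => Fintype.piFinset fun _ => Finset.range (d + 1)),
          ((∏ k, Nat.multinomial Finset.univ (fun l => a l k) : ℕ) : R) *
            ∏ k, ∏ l, (μ l k) ^ (a l k) := by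
  classical
  simp only [Finset.sum_pow_eq_sum_piAntidiag]
  rw [Finset.prod_univ_sum, MvPolynomial.coeff_sum]
  simp only [term_eq_aux, MvPolynomial.coeff_C_mul, MvPolynomial.coeff_monomial,
    mul_ite, mul_one, mul_zero, EmbeddingLike.apply_eq_iff_eq, funext_iff]
  rw [← Finset.sum_filter]
  refine Finset.sum_nbij' (i := fun g l k => g k l) (j := fun a k l => a l k)
    ?_ ?_ (fun _ _ => rfl) (fun _ _ => rfl) ?_
  · intro g hg
    rw [Finset.mem_filter] at hg ⊢
    obtain ⟨hmem, hcol⟩ := hg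
    rw [Fintype.mem_piFinset] at hmem
    have hrow : ∀ k, ∑ l, g k l = d := fun k => (Finset.mem_piAntidiag.mp (hmem k)).1
    refine ⟨?_, fun k => hcol k, fun l => hrow l⟩
    rw [Fintype.mem_piFinset]
    intro l
    rw [Fintype.mem_piFinset]
    intro k
    rw [Finset.mem_range, Nat.lt_succ_iff, ← hrow k]
    exact Finset.single_le_sum (f := g k) (fun _ _ => Nat.zero_le _) (Finset.mem_univ l)
  · intro a ha
    rw [Finset.mem_filter] at ha ⊢
    obtain ⟨_, hk, hl⟩ := ha
    refine ⟨?_, hk⟩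
    rw [Fintype.mem_piFinset]
    intro k
    exact Finset.mem_piAntidiag.mpr ⟨hl k, fun i _ => Finset.mem_univ i⟩
  · intro g hg
    rfl
end

section
/- Let R and S be commutative rings with Algebra R S and Algebra.FormallySmooth R S. Let Λ be a type, x : Λ → S a family of elements, and let ρ := MvPolynomial.aeval x : MvPolynomial Λ R →ₐ[R] S be the R-algebra homomorphism sending X λ to x λ; endow S with the MvPolynomial Λ R-algebra structure induced by ρ (compatible with the R-algebra structures). Then the following are equivalent: (i) there exists a basis b : Basis Λ S (Ω[S⁄R]) with b λ = D R S (x λ) for all λ; (ii) Algebra.FormallyEtale (MvPolynomial Λ R) S. -/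
set_option maxHeartbeats 1000000

open MvPolynomial TensorProduct

universe u

section Aux

variable (R P S : Type u) [CommRing R] [CommRing P] [CommRing S]
  [Algebra R P] [Algebra P S] [Algebra R S] [IsScalarTower R P S]

/-- If the base-change map `S ⊗[P] Ω[P⁄R] → Ω[S⁄R]` is surjective, then `S` is formally
unramified over `P`. -/
theorem aux_unramified_of_surjective
    (hu : Function.Surjective (KaehlerDifferential.mapBaseChange R P S)) :
    Algebra.FormallyUnramified P S := by
  constructor
  have hker : LinearMap.ker (KaehlerDifferential.map R P S S) = ⊤ := by
    rw [← KaehlerDifferential.range_mapBaseChange, LinearMap.range_eq_top.mpr hu]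
  refine subsingleton_of_forall_eq 0 fun y => ?_
  obtain ⟨z, rfl⟩ := KaehlerDifferential.map_surjective R P S y
  have : z ∈ LinearMap.ker (KaehlerDifferential.map R P S S) := hker ▸ Submodule.mem_top
  simpa using this

/-- If `S` is formally unramified over `P`, the base-change map
`S ⊗[P] Ω[P⁄R] → Ω[S⁄R]` is surjective. -/
theorem aux_surjective_of_unramified [Algebra.FormallyUnramified P S] :
    Function.Surjective (KaehlerDifferential.mapBaseChange R P S) := by
  rw [← LinearMap.range_eq_top, KaehlerDifferential.range_mapBaseChange, eq_top_iff]
  exact fun z _ => by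
    simp [LinearMap.mem_ker, Subsingleton.elim (KaehlerDifferential.map R P S S z) 0]

/-- If `S` is formally smooth over `P`, the base-change map `S ⊗[P] Ω[P⁄R] → Ω[S⁄R]` has a
retraction (constructed via a lift to the trivial square-zero extension by `S ⊗[P] Ω[P⁄R]`
with a twisted `P`-algebra structure). -/
theorem aux_retraction [Algebra.FormallySmooth P S] :
    ∃ ℓ : Ω[S⁄R] →ₗ[S] S ⊗[P] Ω[P⁄R],
      ℓ ∘ₗ KaehlerDifferential.mapBaseChange R P S = LinearMap.id := by
  classical
  -- the twisted `P`-algebra structure on `T := TrivSqZeroExt S (S ⊗[P] Ω[P⁄R])`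
  let τ : P →+* TrivSqZeroExt S (S ⊗[P] Ω[P⁄R]) :=
  { toFun := fun p => ⟨algebraMap P S p, 1 ⊗ₜ KaehlerDifferential.D R P p⟩
    map_one' := by ext <;> simp
    map_mul' := fun p q => by
      have key : ∀ (a b : P), algebraMap P S a • ((1:S) ⊗ₜ[P] KaehlerDifferential.D R P b)
          = (1:S) ⊗ₜ[P] (a • KaehlerDifferential.D R P b) := fun a b => by
        rw [TensorProduct.tmul_smul, algebraMap_smul]
      refine TrivSqZeroExt.ext ?_ ?_
      · show algebraMap P S (p * q) = algebraMap P S p * algebraMap P S q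
        simp [TrivSqZeroExt.fst_mul]
      · show (1:S) ⊗ₜ[P] KaehlerDifferential.D R P (p * q)
          = algebraMap P S p • ((1:S) ⊗ₜ[P] KaehlerDifferential.D R P q)
            + MulOpposite.op (algebraMap P S q) • ((1:S) ⊗ₜ[P] KaehlerDifferential.D R P p)
        simp only [TrivSqZeroExt.fst, TrivSqZeroExt.snd, op_smul_eq_smul, key,
          Derivation.leibniz, TensorProduct.tmul_add]
    map_zero' := by ext <;> simp
    map_add' := fun p q => by refine TrivSqZeroExt.ext ?_ ?_ <;> simp [TensorProduct.tmul_add] <;> rfl }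
  letI : Algebra P (TrivSqZeroExt S (S ⊗[P] Ω[P⁄R])) := τ.toAlgebra
  let I : Ideal (TrivSqZeroExt S (S ⊗[P] Ω[P⁄R])) :=
    RingHom.ker (TrivSqZeroExt.fstHom S S (S ⊗[P] Ω[P⁄R]))
  have hmem : ∀ t : TrivSqZeroExt S (S ⊗[P] Ω[P⁄R]), t ∈ I ↔ t.fst = 0 := fun t => Iff.rfl
  have hI : I ^ 2 = ⊥ := by
    rw [pow_two, eq_bot_iff]
    refine Ideal.mul_le.mpr fun a ha b hb => ?_
    rw [Ideal.mem_bot]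
    ext
    · rw [TrivSqZeroExt.fst_mul, (hmem a).mp ha, zero_mul]; rfl
    · rw [TrivSqZeroExt.snd_mul, (hmem a).mp ha, (hmem b).mp hb]
      simp
  -- the map `S → T ⧸ I` as a `P`-algebra hom
  let f : S →ₐ[P] TrivSqZeroExt S (S ⊗[P] Ω[P⁄R]) ⧸ I :=
  { toRingHom := (Ideal.Quotient.mk I).comp (TrivSqZeroExt.inlHom S (S ⊗[P] Ω[P⁄R]))
    commutes' := fun p => by
      show Ideal.Quotient.mk I (TrivSqZeroExt.inl (algebraMap P S p)) = Ideal.Quotient.mk I (τ p)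
      rw [Ideal.Quotient.mk_eq_mk_iff_sub_mem, hmem]
      show algebraMap P S p - algebraMap P S p = 0
      ring }
  obtain ⟨σ, hσ⟩ := Algebra.FormallySmooth.comp_surjective (R := P) (A := S) I hI f
  have hfst : ∀ s : S, (σ s).fst = s := by
    intro s
    have h1 := congrArg (fun g => g s) hσ
    simp only [AlgHom.comp_apply] at h1
    have h2 : σ s - TrivSqZeroExt.inl s ∈ I := by
      rw [← Ideal.Quotient.mk_eq_mk_iff_sub_mem]
      exact h1
    have h3 := (hmem _).mp h2
    rw [TrivSqZeroExt.fst_sub] at h3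
    simpa [sub_eq_zero] using h3
  have hcom : ∀ p : P, σ (algebraMap P S p) = τ p := fun p => σ.commutes p
  -- the derivation `S → S ⊗[P] Ω[P⁄R]` given by the second component of `σ`
  let δ : Derivation R S (S ⊗[P] Ω[P⁄R]) :=
  { toFun := fun s => (σ s).snd
    map_add' := fun a b => by
      show (σ (a + b)).snd = (σ a).snd + (σ b).snd
      rw [map_add]; rfl
    map_smul' := fun r s => by
      show (σ (r • s)).snd = r • (σ s).snd
      have h1 : σ (r • s) = σ (algebraMap R S r * s) := by rw [Algebra.smul_def]
      rw [h1, IsScalarTower.algebraMap_apply R P S, map_mul, hcom, TrivSqZeroExt.snd_mul]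
      show (algebraMap P S (algebraMap R P r)) • (σ s).snd
          + MulOpposite.op (σ s).fst • ((1:S) ⊗ₜ[P] KaehlerDifferential.D R P (algebraMap R P r))
          = r • (σ s).snd
      rw [Derivation.map_algebraMap, TensorProduct.tmul_zero, smul_zero, add_zero,
        ← IsScalarTower.algebraMap_apply R P S, algebraMap_smul]
    map_one_eq_zero' := by
      show (σ 1).snd = 0
      rw [map_one]
      rfl
    leibniz' := fun a b => by
      show (σ (a * b)).snd = a • (σ b).snd + b • (σ a).snd
      rw [map_mul, TrivSqZeroExt.snd_mul, op_smul_eq_smul, hfst, hfst] }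
  have hδ : ∀ p : P, δ (algebraMap P S p) = 1 ⊗ₜ KaehlerDifferential.D R P p := fun p => by
    show (σ (algebraMap P S p)).snd = _
    rw [hcom]
    rfl
  refine ⟨δ.liftKaehlerDifferential, ?_⟩
  apply (LinearMap.liftBaseChangeEquiv S).symm.injective
  apply Derivation.liftKaehlerDifferential_unique
    ((LinearMap.liftBaseChangeEquiv S).symm (δ.liftKaehlerDifferential ∘ₗ
        KaehlerDifferential.mapBaseChange R P S))
    ((LinearMap.liftBaseChangeEquiv S).symm LinearMap.id)
  ext p
  rw [Derivation.coe_comp, Derivation.coe_comp]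
  show ((LinearMap.liftBaseChangeEquiv S).symm (δ.liftKaehlerDifferential ∘ₗ
        KaehlerDifferential.mapBaseChange R P S)) (KaehlerDifferential.D R P p)
      = ((LinearMap.liftBaseChangeEquiv S).symm LinearMap.id) (KaehlerDifferential.D R P p)
  rw [LinearMap.liftBaseChangeEquiv_symm_apply, LinearMap.liftBaseChangeEquiv_symm_apply,
    LinearMap.comp_apply, KaehlerDifferential.mapBaseChange_tmul, one_smul,
    KaehlerDifferential.map_D, Derivation.liftKaehlerDifferential_comp_D, hδ, LinearMap.id_apply]

/-- If the base-change map `S ⊗[P] Ω[P⁄R] → Ω[S⁄R]` is bijective and `S` is formally smooth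
over `R`, then `S` is formally smooth over `P`. -/
theorem aux_smooth [Algebra.FormallySmooth R S]
    (hu : Function.Bijective (KaehlerDifferential.mapBaseChange R P S)) :
    Algebra.FormallySmooth P S := by
  classical
  refine Algebra.FormallySmooth.of_comp_surjective ?_
  intro B _ _ I hI hf
  -- `hf : S →ₐ[P] B ⧸ I`; we must lift it to `S →ₐ[P] B`.
  letI : Algebra R B := ((algebraMap P B).comp (algebraMap R P)).toAlgebra
  haveI : IsScalarTower R P B := IsScalarTower.of_algebraMap_eq' rfl
  haveI : IsScalarTower R P (B ⧸ I) := IsScalarTower.of_algebraMap_eq fun r => by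
    show Ideal.Quotient.mk I (algebraMap R B r)
        = Ideal.Quotient.mk I (algebraMap P B (algebraMap R P r))
    rfl
  obtain ⟨g, hg⟩ := Algebra.FormallySmooth.comp_surjective (R := R) (A := S) I hI
    (hf.restrictScalars R)
  -- the derivation measuring the failure of `g` to be a `P`-algebra map
  have e : (Ideal.Quotient.mkₐ R I).comp (g.comp (IsScalarTower.toAlgHom R P S)) =
      IsScalarTower.toAlgHom R P (B ⧸ I) := by
    ext p
    show Ideal.Quotient.mk I (g (algebraMap P S p)) = algebraMap P (B ⧸ I) p
    have := congrArg (fun h => h (algebraMap P S p)) hg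
    simp only [AlgHom.comp_apply] at this
    exact this.trans (hf.commutes p)
  let δ : Derivation R P I := derivationToSquareZeroOfLift I hI
    (g.comp (IsScalarTower.toAlgHom R P S)) e
  have hδ : ∀ p : P, (δ p : B) = g (algebraMap P S p) - algebraMap P B p := fun p => rfl
  have hmul : ∀ a ∈ I, ∀ b ∈ I, a * b = 0 := fun a ha b hb => by
    rw [← Ideal.mem_bot, ← hI, pow_two]
    exact Ideal.mul_mem_mul ha hb
  -- make `B` an `S`-algebra via `g`
  letI : Algebra S B := g.toRingHom.toAlgebra
  haveI : IsScalarTower R S B := IsScalarTower.of_algebraMap_eq fun r => (g.commutes r).symm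
  haveI : IsScalarTower R S I := ⟨fun r s i => Subtype.ext (smul_assoc r s (i : B))⟩
  have key : ∀ (p : P) (s : S) (b : B), b ∈ I →
      algebraMap S B (algebraMap P S p * s) * b = algebraMap P B p * (algebraMap S B s * b) := by
    intro p s b hb
    have hgS : ∀ t : S, algebraMap S B t = g t := fun t => rfl
    have h1 : (g (algebraMap P S p) - algebraMap P B p) * (g s * b) = 0 := by
      refine hmul _ ?_ _ (Ideal.mul_mem_left _ _ hb)
      have := (δ p).2
      rwa [hδ] at this
    rw [sub_mul, sub_eq_zero] at h1
    rw [hgS, hgS, map_mul, mul_assoc, h1]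
  haveI : IsScalarTower P S I := by
    refine ⟨fun p s i => Subtype.ext ?_⟩
    show (((p • s) • i : I) : B) = ((p • (s • i) : I) : B)
    rw [Submodule.coe_smul_of_tower, Submodule.coe_smul_of_tower, Submodule.coe_smul_of_tower]
    simp only [Algebra.smul_def]
    exact key p s i i.2
  -- assemble the correction derivation on `S`
  let eqv := LinearEquiv.ofBijective _ hu
  let ℓ : Ω[S⁄R] →ₗ[S] I := (δ.liftKaehlerDifferential.liftBaseChange S) ∘ₗ
    (eqv.symm : Ω[S⁄R] →ₗ[S] S ⊗[P] Ω[P⁄R])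
  let D' : Derivation R S I := ℓ.compDer (KaehlerDifferential.D R S)
  have hD' : ∀ p : P, D' (algebraMap P S p) = δ p := by
    intro p
    have h1 : eqv (1 ⊗ₜ KaehlerDifferential.D R P p)
        = KaehlerDifferential.D R S (algebraMap P S p) := by
      show KaehlerDifferential.mapBaseChange R P S (1 ⊗ₜ KaehlerDifferential.D R P p) = _
      rw [KaehlerDifferential.mapBaseChange_tmul, one_smul, KaehlerDifferential.map_D]
    show ℓ (KaehlerDifferential.D R S (algebraMap P S p)) = δ p
    rw [← h1]
    show (δ.liftKaehlerDifferential.liftBaseChange S)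
        (eqv.symm (eqv (1 ⊗ₜ KaehlerDifferential.D R P p))) = δ p
    rw [LinearEquiv.symm_apply_apply, LinearMap.liftBaseChange_tmul, one_smul,
      Derivation.liftKaehlerDifferential_comp_D]
  -- the corrected lift
  let h₀ : S →ₐ[R] B := liftOfDerivationToSquareZero I hI (-D')
  have h₀app : ∀ s : S, h₀ s = g s - (D' s : B) := fun s => by
    show ((-D') s : B) + algebraMap S B s = g s - (D' s : B)
    show -(D' s : B) + g s = _
    ring
  refine ⟨{ toRingHom := h₀.toRingHom, commutes' := fun p => ?_ }, ?_⟩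
  · show h₀ (algebraMap P S p) = algebraMap P B p
    rw [h₀app, hD', hδ]
    ring
  · ext s
    show Ideal.Quotient.mk I (h₀ s) = hf s
    rw [h₀app, map_sub, Ideal.Quotient.eq_zero_iff_mem.mpr (D' s).2, sub_zero]
    exact congrArg (fun h => h s) hg

end Aux

/-- For a formally smooth algebra `R → S` and a family `x : Λ → S`, inducing on `S` the
`MvPolynomial Λ R`-algebra structure via `ρ := aeval x`, the family `x` is a differential
basis (the `D R S (x λ)` form a basis of `Ω[S⁄R]`) if and only if `ρ` is formally étale. -/
theorem differential_basis_iff_formallyEtale (R S : Type u) [CommRing R] [CommRing S]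
    [Algebra R S] [Algebra.FormallySmooth R S] (Λ : Type u) (x : Λ → S) :
    letI : Algebra (MvPolynomial Λ R) S :=
      (MvPolynomial.aeval x : MvPolynomial Λ R →ₐ[R] S).toRingHom.toAlgebra
    ((∃ b : Module.Basis Λ S (Ω[S⁄R]), ∀ l : Λ, b l = KaehlerDifferential.D R S (x l)) ↔
      Algebra.FormallyEtale (MvPolynomial Λ R) S) := by
  letI : Algebra (MvPolynomial Λ R) S :=
    (MvPolynomial.aeval x : MvPolynomial Λ R →ₐ[R] S).toRingHom.toAlgebra
  haveI : IsScalarTower R (MvPolynomial Λ R) S :=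
    IsScalarTower.of_algebraMap_eq fun r => ((MvPolynomial.aeval x).commutes r).symm
  show ((∃ b : Module.Basis Λ S (Ω[S⁄R]), ∀ l : Λ, b l = KaehlerDifferential.D R S (x l)) ↔
      Algebra.FormallyEtale (MvPolynomial Λ R) S)
  have hx : ∀ l : Λ, algebraMap (MvPolynomial Λ R) S (X l) = x l := fun l => aeval_X x l
  let b' : Module.Basis Λ S (S ⊗[MvPolynomial Λ R] Ω[MvPolynomial Λ R⁄R]) :=
    (KaehlerDifferential.mvPolynomialBasis R Λ).baseChange S
  have hub' : ∀ l : Λ, KaehlerDifferential.mapBaseChange R (MvPolynomial Λ R) S (b' l)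
      = KaehlerDifferential.D R S (x l) := fun l => by
    rw [show b' l = 1 ⊗ₜ KaehlerDifferential.D R (MvPolynomial Λ R) (X l) by
        rw [Module.Basis.baseChange_apply, KaehlerDifferential.mvPolynomialBasis_apply],
      KaehlerDifferential.mapBaseChange_tmul, one_smul, KaehlerDifferential.map_D, hx]
  have main : (∃ b : Module.Basis Λ S (Ω[S⁄R]), ∀ l : Λ, b l = KaehlerDifferential.D R S (x l)) ↔
      Function.Bijective (KaehlerDifferential.mapBaseChange R (MvPolynomial Λ R) S) := by
    constructor
    · rintro ⟨b, hb⟩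
      have heq : (KaehlerDifferential.mapBaseChange R (MvPolynomial Λ R) S)
          = (b'.equiv b (Equiv.refl Λ) : _ →ₗ[S] _) := by
        apply b'.ext
        intro l
        rw [hub' l]
        rw [show ((b'.equiv b (Equiv.refl Λ)) : _ →ₗ[S] _) (b' l) = b'.equiv b (Equiv.refl Λ) (b' l)
          from rfl, Module.Basis.equiv_apply, Equiv.refl_apply, hb]
      have : ⇑(KaehlerDifferential.mapBaseChange R (MvPolynomial Λ R) S)
          = ⇑(b'.equiv b (Equiv.refl Λ)) := by rw [heq]; rfl
      rw [this]
      exact (b'.equiv b (Equiv.refl Λ)).bijective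
    · intro hu
      refine ⟨b'.map (LinearEquiv.ofBijective _ hu), fun l => ?_⟩
      rw [Module.Basis.map_apply]
      exact hub' l
  rw [main, Algebra.FormallyEtale.iff_formallyUnramified_and_formallySmooth]
  constructor
  · intro hu
    exact ⟨aux_unramified_of_surjective R (MvPolynomial Λ R) S hu.surjective,
      aux_smooth R (MvPolynomial Λ R) S hu⟩
  · rintro ⟨h1, h2⟩
    obtain ⟨ℓ, hℓ⟩ := aux_retraction R (MvPolynomial Λ R) S
    refine ⟨Function.LeftInverse.injective (g := ℓ) fun z => ?_,
      aux_surjective_of_unramified R (MvPolynomial Λ R) S⟩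
    have := congrArg (fun m => m z) hℓ
    simpa using this
end

section
/- Let p be a prime, S a commutative ring with CharP S p, R a commutative ring with Algebra R S, n : ℕ, and x : Fin n → S. Let B := Algebra.adjoin R (Set.range (fun s : S => s^p)). If there exists a basis of S as a B-module indexed by a : Fin n → Fin p whose a-th element is ∏_i (x i)^((a i : ℕ)), then there exists a basis b : Basis (Fin n) S (Ω[S⁄R]) with b i = D R S (x i) for all i. (A p-basis is a differential basis; no noetherian or smoothness hypotheses are needed.) -/
/-- A `p`-basis is a differential basis: if the monomials `∏ i, x i ^ (a i)`,
`a : Fin n → Fin p`, form a basis of `S` over the subalgebra `B = R[Sᵖ]`, then the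
`D R S (x i)` form a basis of `Ω[S⁄R]`. No noetherian or smoothness hypotheses needed. -/
theorem differential_basis_of_pBasis (p : ℕ) (hp : p.Prime) (R S : Type*) [CommRing R]
    [CommRing S] [Algebra R S] [CharP S p] (n : ℕ) (x : Fin n → S)
    (h : ∃ 𝔅 : Module.Basis (Fin n → Fin p) (Algebra.adjoin R (Set.range fun s : S => s ^ p)) S,
        ∀ a : Fin n → Fin p, 𝔅 a = ∏ i, x i ^ (a i : ℕ)) :
    ∃ b : Module.Basis (Fin n) S (Ω[S⁄R]), ∀ i, b i = KaehlerDifferential.D R S (x i) := by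
  classical
  have hp1 : 1 < p := hp.one_lt
  set B := Algebra.adjoin R (Set.range fun s : S => s ^ p) with hB
  obtain ⟨𝔅, h𝔅⟩ := h
  set m : (Fin n → ℕ) → S := fun c => ∏ i, x i ^ c i with hm
  have hmdef : ∀ c : Fin n → ℕ, m c = ∏ i, x i ^ c i := fun _ => rfl
  have h𝔅' : ∀ a : Fin n → Fin p, 𝔅 a = m (fun i => (a i : ℕ)) := fun a => by
    rw [h𝔅 a, hmdef]
  have hbs : ∀ (b : B) (y : S), b • y = (b : S) * y := fun _ _ => rfl
  -- core monomial manipulation lemmas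
  have mkey : ∀ (d : Fin n → ℕ) (j : Fin n) (e : ℕ),
      m (Function.update d j e) = x j ^ e * ∏ i ∈ Finset.univ.erase j, x i ^ d i := by
    intro d j e
    rw [hmdef]
    rw [← Finset.mul_prod_erase Finset.univ _ (Finset.mem_univ j)]
    congr 1
    · simp
    · exact Finset.prod_congr rfl fun i hi => by
        rw [Function.update_of_ne (Finset.ne_of_mem_erase hi)]
  have mupd : ∀ (d : Fin n → ℕ) (j : Fin n) (e : ℕ),
      x j ^ e * m (Function.update d j 0) = m (Function.update d j e) := by
    intro d j e
    rw [mkey, mkey, pow_zero, one_mul]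
  have mupd1 : ∀ (d : Fin n → ℕ) (j : Fin n),
      x j * m d = m (Function.update d j (d j + 1)) := by
    intro d j
    have h0 : m d = m (Function.update d j (d j)) := by rw [Function.update_eq_self]
    rw [h0, ← mupd d j (d j), ← mupd d j (d j + 1), ← mul_assoc, ← pow_succ']
  -- (A) the universal derivation vanishes on B
  have hD0 : ∀ s ∈ B, KaehlerDifferential.D R S s = 0 := by
    intro s hs
    induction hs using Algebra.adjoin_induction with
    | mem t ht =>
        obtain ⟨u, rfl⟩ := ht
        rw [Derivation.leibniz_pow, ← Nat.cast_smul_eq_nsmul S p, CharP.cast_eq_zero S p,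
          zero_smul]
    | algebraMap r => simp
    | add a b _ _ ha hb => rw [map_add, ha, hb, add_zero]
    | mul a b _ _ ha hb => rw [Derivation.leibniz, ha, hb, smul_zero, smul_zero, add_zero]
  -- (B) spanning
  set M := Submodule.span S (Set.range fun i => KaehlerDifferential.D R S (x i)) with hM
  have hmulM : ∀ s t : S, KaehlerDifferential.D R S s ∈ M → KaehlerDifferential.D R S t ∈ M →
      KaehlerDifferential.D R S (s * t) ∈ M := by
    intro s t hs ht
    rw [Derivation.leibniz]
    exact Submodule.add_mem _ (Submodule.smul_mem _ _ ht) (Submodule.smul_mem _ _ hs)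
  have hpow : ∀ (i : Fin n) (e : ℕ), KaehlerDifferential.D R S (x i ^ e) ∈ M := by
    intro i e
    induction e with
    | zero => simp
    | succ e ih =>
        rw [pow_succ]
        exact hmulM _ _ ih (Submodule.subset_span ⟨i, rfl⟩)
  have hmono : ∀ c : Fin n → ℕ, KaehlerDifferential.D R S (m c) ∈ M := by
    intro c
    rw [hmdef]
    exact Finset.prod_induction _ (fun y => KaehlerDifferential.D R S y ∈ M)
      (fun a b => hmulM a b) (by simp) (fun i _ => hpow i (c i))
  have hDmem : ∀ s : S, KaehlerDifferential.D R S s ∈ M := by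
    intro s
    rw [← Module.Basis.sum_repr 𝔅 s, map_sum]
    refine Submodule.sum_mem _ fun a _ => ?_
    rw [hbs, Derivation.leibniz, hD0 _ (𝔅.repr s a).2, smul_zero, add_zero]
    refine Submodule.smul_mem _ _ ?_
    rw [h𝔅']
    exact hmono _
  have hspan : M = ⊤ := by
    rw [← top_le_iff, ← KaehlerDifferential.span_range_derivation, Submodule.span_le]
    rintro _ ⟨s, rfl⟩
    exact hDmem s
  -- (C) partial derivatives
  set val : Fin n → (Fin n → Fin p) → S := fun k a =>
    ((a k : ℕ) : S) * m (Function.update (fun i => (a i : ℕ)) k ((a k : ℕ) - 1)) with hval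
  have hvaldef : ∀ (k : Fin n) (a : Fin n → Fin p), val k a =
      ((a k : ℕ) : S) * m (Function.update (fun i => (a i : ℕ)) k ((a k : ℕ) - 1)) :=
    fun _ _ => rfl
  set L : Fin n → (S →ₗ[B] S) := fun k => 𝔅.constr ℕ (val k) with hL
  have hLb : ∀ (k : Fin n) (a : Fin n → Fin p), L k (𝔅 a) = val k a := fun k a =>
    𝔅.constr_basis ℕ _ a
  have hxlow : ∀ (c : Fin n → ℕ) (k : Fin n),
      ((c k : ℕ) : S) * (x k * m (Function.update c k (c k - 1))) = (c k : S) * m c := by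
    intro c k
    rcases Nat.eq_zero_or_pos (c k) with h0 | h0
    · rw [h0]; simp
    · congr 1
      rw [mupd1, Function.update_idem, Function.update_self, Nat.sub_add_cancel h0,
        Function.update_eq_self]
  -- the indicator exponents
  set ej : Fin n → (Fin n → Fin p) := fun j i => if i = j then ⟨1, hp1⟩ else ⟨0, hp.pos⟩
    with hej
  have hejv : ∀ j i : Fin n, ((ej j i : Fin p) : ℕ) = if i = j then 1 else 0 := by
    intro j i
    rcases eq_or_ne i j with rfl | hij
    · simp [hej]
    · simp [hej, hij]
  have h1B : (1 : S) = 𝔅 (fun _ => (⟨0, hp.pos⟩ : Fin p)) := by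
    rw [h𝔅]; simp
  have hL1 : ∀ k, L k 1 = 0 := by
    intro k
    rw [h1B, hLb]
    show ((((fun _ => (⟨0, hp.pos⟩ : Fin p)) k : Fin p) : ℕ) : S) * _ = 0
    simp
  have hxB : ∀ j : Fin n, x j = 𝔅 (ej j) := by
    intro j
    rw [h𝔅]
    simp only [hejv]
    rw [Finset.prod_eq_single j]
    · simp
    · intro i _ hij
      simp [hij]
    · simp
  have hLx : ∀ k j, L k (x j) = if j = k then 1 else 0 := by
    intro k j
    rw [hxB j, hLb, hvaldef]
    rcases eq_or_ne j k with rfl | hjk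
    · rw [if_pos rfl]
      have he1 : ((ej j j : Fin p) : ℕ) = 1 := by rw [hejv]; simp
      rw [he1]
      have hupd : Function.update (fun i => ((ej j i : Fin p) : ℕ)) j (1 - 1)
          = fun _ => (0 : ℕ) := by
        funext i
        rcases eq_or_ne i j with rfl | hij
        · simp
        · rw [Function.update_of_ne hij, hejv, if_neg hij]
      rw [hupd]
      simp [hmdef]
    · rw [if_neg hjk]
      have he0 : ((ej j k : Fin p) : ℕ) = 0 := by rw [hejv, if_neg (Ne.symm hjk)]
      rw [he0]
      simp
  -- key computation: Leibniz rule against basis monomials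
  have key : ∀ (k j : Fin n) (a : Fin n → Fin p),
      L k (x j * 𝔅 a) = x j * L k (𝔅 a) + 𝔅 a * L k (x j) := by
    intro k j a
    set c : Fin n → ℕ := fun i => ((a i : Fin p) : ℕ) with hc
    have hck : ∀ i, ((a i : Fin p) : ℕ) = c i := fun _ => rfl
    have hcatm : 𝔅 a = m c := h𝔅' a
    have hcjlt : c j + 1 ≤ p := (a j).2
    rw [hLb, hLx, hvaldef]
    rcases lt_or_eq_of_le hcjlt with hcp | hcp
    · -- no carrying: x j * 𝔅 a is again a basis monomial
      set a' : Fin n → Fin p := Function.update a j (⟨c j + 1, hcp⟩ : Fin p) with ha'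
      have ha'k : ∀ i, ((a' i : Fin p) : ℕ) = Function.update c j (c j + 1) i := by
        intro i
        rcases eq_or_ne i j with rfl | hij
        · simp [ha']
        · rw [Function.update_of_ne hij, ha', Function.update_of_ne hij, hck]
      have ha'c : (fun i => ((a' i : Fin p) : ℕ)) = Function.update c j (c j + 1) :=
        funext ha'k
      have hxa : x j * 𝔅 a = 𝔅 a' := by
        rw [hcatm, h𝔅' a', ha'c, mupd1]
      rw [hxa, hLb, hvaldef, ha'c]
      simp only [ha'k, hck]
      simp only [show (fun i => c i) = c from rfl]
      rcases eq_or_ne j k with rfl | hjk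
      · simp only [Function.update_self]
        rw [Function.update_idem, Nat.add_sub_cancel, Function.update_eq_self, if_pos trivial,
          mul_one, hcatm, mul_left_comm, hxlow]
        push_cast
        ring
      · simp only [Function.update_of_ne (Ne.symm hjk)]
        rw [if_neg hjk, mul_zero, add_zero, Function.update_comm hjk, mul_left_comm,
          mupd1, Function.update_of_ne hjk]
    · -- carrying: x j ^ p is absorbed into the base ring B
      set xp : B := ⟨x j ^ p, by rw [hB]; exact Algebra.subset_adjoin ⟨x j, rfl⟩⟩ with hxp
      have hxpv : (xp : S) = x j ^ p := rfl
      set a' : Fin n → Fin p := Function.update a j (⟨0, hp.pos⟩ : Fin p) with ha'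
      have ha'k : ∀ i, ((a' i : Fin p) : ℕ) = Function.update c j 0 i := by
        intro i
        rcases eq_or_ne i j with rfl | hij
        · simp [ha']
        · rw [Function.update_of_ne hij, ha', Function.update_of_ne hij, hck]
      have ha'c : (fun i => ((a' i : Fin p) : ℕ)) = Function.update c j 0 :=
        funext ha'k
      have hxa : x j * 𝔅 a = xp • 𝔅 a' := by
        rw [hbs, hcatm, h𝔅' a', ha'c, mupd1, hcp, ← mupd]
      rw [hxa, map_smul, hbs, hLb, hvaldef, ha'c]
      simp only [ha'k, hck]
      simp only [show (fun i => c i) = c from rfl]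
      rcases eq_or_ne j k with rfl | hjk
      · simp only [Function.update_self, Nat.cast_zero, zero_mul, mul_zero]
        rw [if_pos trivial, mul_one, hcatm, mul_left_comm, hxlow]
        have hmc : ((c j : ℕ) : S) * m c + m c = (((c j + 1 : ℕ)) : S) * m c := by
          push_cast; ring
        rw [hmc, hcp, CharP.cast_eq_zero S p, zero_mul]
      · simp only [Function.update_of_ne (Ne.symm hjk)]
        rw [if_neg hjk, mul_zero, add_zero, Function.update_comm hjk, mul_left_comm,
          mupd, mul_left_comm, mupd1, Function.update_of_ne hjk, hcp]
  -- Leibniz with one factor arbitrary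
  have key2 : ∀ (k j : Fin n) (t : S), L k (x j * t) = x j * L k t + t * L k (x j) := by
    intro k j
    have hfg : (L k).comp (LinearMap.mulLeft B (x j)) =
        (LinearMap.mulLeft B (x j)).comp (L k) + LinearMap.mulRight B (L k (x j)) := by
      refine Module.Basis.ext 𝔅 fun a => ?_
      simp only [LinearMap.comp_apply, LinearMap.add_apply, LinearMap.mulLeft_apply,
        LinearMap.mulRight_apply]
      exact key k j a
    intro t
    have := LinearMap.congr_fun hfg t
    simpa only [LinearMap.comp_apply, LinearMap.add_apply, LinearMap.mulLeft_apply,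
      LinearMap.mulRight_apply] using this
  -- full Leibniz rule
  have key3 : ∀ (k : Fin n) (s t : S), L k (s * t) = s * L k t + t * L k s := by
    intro k s
    let P : S → Prop := fun s => ∀ t, L k (s * t) = s * L k t + t * L k s
    suffices hs : P s from hs
    have hP1 : P 1 := by intro t; rw [one_mul, hL1, mul_zero, add_zero, one_mul]
    have hPmul : ∀ u v, P u → P v → P (u * v) := by
      intro u v hu hv t
      rw [mul_assoc, hu (v * t), hv t, hu v]
      ring
    have hPpow : ∀ (j : Fin n) (e : ℕ), P (x j ^ e) := by
      intro j e
      induction e with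
      | zero => simpa using hP1
      | succ e ih => rw [pow_succ]; exact hPmul _ _ ih (key2 k j)
    have hPm : ∀ c : Fin n → ℕ, P (m c) := by
      intro c
      rw [hmdef]
      exact Finset.prod_induction _ P hPmul hP1 fun j _ => hPpow j (c j)
    have hPsmul : ∀ (b : B) (u : S), P u → P (b • u) := by
      intro b u hu t
      rw [smul_mul_assoc, map_smul, hu t, smul_add, smul_mul_assoc, map_smul,
        mul_smul_comm b t]

    have hPall : ∀ u : S, P u := by
      intro u
      rw [← Module.Basis.sum_repr 𝔅 u]
      refine Finset.sum_induction _ P (fun a b ha hb t => ?_) (fun t => by simp) ?_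
      · rw [add_mul, map_add, ha t, hb t, map_add]; ring
      · intro a _
        exact hPsmul _ _ (by rw [h𝔅']; exact hPm _)
    exact hPall s
  -- the linear maps are R-linear derivations
  have hLsmulR : ∀ (k : Fin n) (r : R) (s : S), L k (r • s) = r • L k s := by
    intro k r s
    rw [← IsScalarTower.algebraMap_smul B r s, map_smul, IsScalarTower.algebraMap_smul]
  set Der : Fin n → Derivation R S S := fun k =>
    { toLinearMap :=
        { toFun := L k
          map_add' := fun a b => map_add (L k) a b
          map_smul' := fun r s => hLsmulR k r s }
      map_one_eq_zero' := hL1 k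
      leibniz' := fun a b => by
        simp only [LinearMap.coe_mk, AddHom.coe_mk, smul_eq_mul]
        exact key3 k a b } with hDer
  have hDerapp : ∀ k s, Der k s = L k s := fun _ _ => rfl
  -- linear independence
  have hind : LinearIndependent S fun i => KaehlerDifferential.D R S (x i) := by
    rw [Fintype.linearIndependent_iff]
    intro g hg k
    have h1 := congrArg (Derivation.liftKaehlerDifferential (Der k)) hg
    rw [map_sum, map_zero] at h1
    simp only [map_smul, Derivation.liftKaehlerDifferential_comp_D] at h1
    rw [Finset.sum_eq_single k] at h1
    · rw [hDerapp, hLx, if_pos rfl, smul_eq_mul, mul_one] at h1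
      exact h1
    · intro i _ hik
      rw [hDerapp, hLx, if_neg hik, smul_zero]
    · simp
  refine ⟨Module.Basis.mk hind ?_, fun i => Module.Basis.mk_apply _ _ _⟩
  exact hspan.ge
end

section
/- Let p be a prime, R a commutative ring with CharP R p, and n : ℕ. Set S := MvPolynomial (Fin n) R and B := Algebra.adjoin R (Set.range (fun i : Fin n => (X i)^p)), the R-subalgebra of S generated by X 0^p, …, X (n−1)^p. Then there exists a basis of S as a B-module indexed by a : Fin n → Fin p whose a-th element is the monomial ∏_i (X i)^((a i : ℕ)). (That is, the variables form a p-basis of the polynomial algebra.) -/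
open MvPolynomial

section Aux

variable {p n : ℕ} {R : Type*} [CommRing R]

/-- The finsupp exponent vector of a tuple in `Fin p`. -/
noncomputable def pBasisAF (a : Fin n → Fin p) : Fin n →₀ ℕ :=
  Finsupp.equivFunOnFinite.symm fun i => (a i : ℕ)

lemma pBasisAF_apply (a : Fin n → Fin p) (i : Fin n) : pBasisAF a i = a i := rfl

lemma pBasis_expand_monomial (hp : p ≠ 0) (q : Fin n →₀ ℕ) (r : R) :
    expand p (monomial q r) = monomial (p • q) r := by
  rw [expand_monomial, monomial_eq]

lemma pBasis_decomp_inj (hp : 0 < p) {q q' : Fin n →₀ ℕ} {a a' : Fin n → Fin p}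
    (h : p • q' + pBasisAF a' = p • q + pBasisAF a) : q' = q ∧ a' = a := by
  have key : ∀ i : Fin n, q' i = q i ∧ (a' i : ℕ) = a i := by
    intro i
    have hi : p * q' i + (a' i : ℕ) = p * q i + (a i : ℕ) := by
      have := DFunLike.congr_fun h i
      simpa [pBasisAF_apply, Finsupp.smul_apply, mul_comm] using this
    have hq : q' i = q i := by
      have h1 : (p * q' i + (a' i : ℕ)) / p = q' i := by
        rw [Nat.mul_add_div hp, Nat.div_eq_of_lt (a' i).2, add_zero]
      have h2 : (p * q i + (a i : ℕ)) / p = q i := by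
        rw [Nat.mul_add_div hp, Nat.div_eq_of_lt (a i).2, add_zero]
      rw [← h1, ← h2, hi]
    have ha : (a' i : ℕ) = a i := by
      have h1 : (p * q' i + (a' i : ℕ)) % p = (a' i : ℕ) := by
        rw [Nat.mul_add_mod, Nat.mod_eq_of_lt (a' i).2]
      have h2 : (p * q i + (a i : ℕ)) % p = (a i : ℕ) := by
        rw [Nat.mul_add_mod, Nat.mod_eq_of_lt (a i).2]
      rw [← h1, ← h2, hi]
    exact ⟨hq, ha⟩
  exact ⟨Finsupp.ext fun i => (key i).1, funext fun i => Fin.ext (key i).2⟩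

lemma pBasis_coeff_key (hp : 0 < p) (s : MvPolynomial (Fin n) R) (q : Fin n →₀ ℕ)
    (a a' : Fin n → Fin p) :
    coeff (p • q + pBasisAF a) (expand p s * monomial (pBasisAF a') 1)
      = if a' = a then coeff q s else 0 := by
  classical
  induction s using MvPolynomial.induction_on' with
  | monomial d r =>
    rw [pBasis_expand_monomial hp.ne' , monomial_mul, mul_one, coeff_monomial, coeff_monomial]
    have hiff : (p • d + pBasisAF a' = p • q + pBasisAF a) ↔ (d = q ∧ a' = a) :=
      ⟨fun h => pBasis_decomp_inj hp h, fun ⟨h1, h2⟩ => by rw [h1, h2]⟩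
    by_cases h : p • d + pBasisAF a' = p • q + pBasisAF a
    · obtain ⟨h1, h2⟩ := hiff.mp h
      simp [h, h1, h2]
    · have := hiff.not.mp h
      rw [if_neg h]
      by_cases h2 : a' = a
      · rw [if_pos h2, if_neg (fun h1 => this ⟨h1, h2⟩)]
      · rw [if_neg h2]
  | add f g hf hg =>
    rw [map_add, add_mul, coeff_add, hf, hg, coeff_add]
    split_ifs <;> simp

lemma pBasis_expand_eq_aeval :
    (expand p : MvPolynomial (Fin n) R →ₐ[R] MvPolynomial (Fin n) R)
      = aeval fun i => X i ^ p := by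
  apply MvPolynomial.algHom_ext
  intro i
  simp

lemma pBasis_prod_eq (a : Fin n → Fin p) :
    (∏ i, (X i : MvPolynomial (Fin n) R) ^ (a i : ℕ)) = monomial (pBasisAF a) 1 := by
  rw [← prod_X_pow_eq_monomial]
  exact (Finset.prod_subset (Finset.subset_univ _) fun i _ hi => by
    rw [show ((a i : ℕ)) = 0 from Finsupp.notMem_support_iff.mp hi, pow_zero]).symm

end Aux

/-- The variables form a `p`-basis of the polynomial algebra: for `R` of characteristic
`p`, the monomials `∏ i, (X i) ^ (a i)`, `a : Fin n → Fin p`, form a basis of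
`S = MvPolynomial (Fin n) R` over the subalgebra `B = R[X 0 ^ p, …, X (n-1) ^ p]`. -/
theorem pBasis_mvPolynomial (p : ℕ) (hp : p.Prime) (R : Type*) [CommRing R] [CharP R p]
    (n : ℕ) :
    ∃ 𝔅 : Module.Basis (Fin n → Fin p)
        (Algebra.adjoin R (Set.range fun i : Fin n => (X i : MvPolynomial (Fin n) R) ^ p))
        (MvPolynomial (Fin n) R),
      ∀ a : Fin n → Fin p, 𝔅 a = ∏ i, (X i : MvPolynomial (Fin n) R) ^ (a i : ℕ) := by
  classical
  set B := Algebra.adjoin R (Set.range fun i : Fin n => (X i : MvPolynomial (Fin n) R) ^ p)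
    with hB
  set v : (Fin n → Fin p) → MvPolynomial (Fin n) R :=
    fun a => ∏ i, (X i : MvPolynomial (Fin n) R) ^ (a i : ℕ) with hv
  have hBrange : B = (aeval fun i : Fin n => (X i : MvPolynomial (Fin n) R) ^ p).range :=
    Algebra.adjoin_range_eq_range_aeval R _
  have hmemB : ∀ x : MvPolynomial (Fin n) R, x ∈ B → ∃ s, expand p s = x := by
    intro x hx
    rw [hBrange] at hx
    obtain ⟨s, hs⟩ := hx
    exact ⟨s, by rw [pBasis_expand_eq_aeval]; exact hs⟩
  have hexpand_mem : ∀ s : MvPolynomial (Fin n) R, expand p s ∈ B := by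
    intro s
    rw [hBrange, pBasis_expand_eq_aeval]
    exact ⟨s, rfl⟩
  have hindep : LinearIndependent B v := by
    rw [Fintype.linearIndependent_iff]
    intro g hg
    choose s hs using fun a => hmemB (g a : MvPolynomial (Fin n) R) (g a).2
    have hsum : ∑ a, expand p (s a) * v a = 0 := by
      rw [← hg]
      refine Finset.sum_congr rfl fun a _ => ?_
      rw [hs a, Subalgebra.smul_def, smul_eq_mul]
    have hs0 : ∀ a, s a = 0 := by
      intro a
      ext q
      have := congrArg (coeff (p • q + pBasisAF a)) hsum
      rw [coeff_sum, coeff_zero] at this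
      have heq : ∀ a' : Fin n → Fin p, a' ∈ Finset.univ →
          coeff (p • q + pBasisAF a) (expand p (s a') * v a')
            = if a' = a then coeff q (s a') else 0 := by
        intro a' _
        have hva' : v a' = monomial (pBasisAF a') 1 := by rw [hv]; exact pBasis_prod_eq a'
        rw [hva']
        exact pBasis_coeff_key hp.pos (s a') q a a'
      rw [Finset.sum_congr rfl heq, Finset.sum_ite_eq' Finset.univ a
        (fun a' => coeff q (s a')), if_pos (Finset.mem_univ a)] at this
      simpa using this
    intro a
    ext
    rw [← hs a, hs0 a, map_zero, ZeroMemClass.coe_zero]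
  have hspan : ⊤ ≤ Submodule.span B (Set.range v) := by
    intro x _
    rw [as_sum x]
    refine Submodule.sum_mem _ fun d _ => ?_
    set q : Fin n →₀ ℕ := d.mapRange (· / p) (Nat.zero_div p) with hq
    set a : Fin n → Fin p := fun i => ⟨d i % p, Nat.mod_lt _ hp.pos⟩ with ha
    have hd : monomial d (coeff d x) = expand p (monomial q (coeff d x)) * v a := by
      have hva : v a = monomial (pBasisAF a) 1 := by rw [hv]; exact pBasis_prod_eq a
      have hdq : d = p • q + pBasisAF a := by
        ext i
        simp only [Finsupp.add_apply, Finsupp.smul_apply, smul_eq_mul, hq,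
        Finsupp.mapRange_apply, pBasisAF_apply, ha]
        exact (Nat.div_add_mod (d i) p).symm
      rw [pBasis_expand_monomial hp.pos.ne', hva, monomial_mul, mul_one, ← hdq]
    rw [hd]
    have : (⟨expand p (monomial q (coeff d x)), hexpand_mem _⟩ : B) • v a ∈
        Submodule.span B (Set.range v) :=
      Submodule.smul_mem _ _ (Submodule.subset_span ⟨a, rfl⟩)
    simpa [Subalgebra.smul_def, smul_eq_mul] using this
  refine ⟨Module.Basis.mk hindep hspan, fun a => ?_⟩
  rw [Module.Basis.mk_apply]
end

section
/- Let p be a prime, R a commutative ring with CharP R p, and n : ℕ. Set S := MvPolynomial (Fin n) R and B := Algebra.adjoin R (Set.range (fun i : Fin n => (X i)^p)). Suppose 𝔅 : Basis (Fin n → Fin p) B S is a basis with 𝔅 a = ∏_i (X i)^((a i : ℕ)) for all a. Let Φ := 𝔅.coord (fun _ => p−1) : S →ₗ[B] B be the coordinate functional dual to the monomial ∏_i (X i)^(p−1), and endow the B-module S →ₗ[B] B with its S-module structure given by (s • φ) t = φ (s * t). Then: (i) for every a : Fin n → Fin p, the coordinate functional 𝔅.coord a equals (∏_i (X i)^(p−1−(a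 i : ℕ))) • Φ; and (ii) the S-linear map S → (S →ₗ[B] B) sending s to s • Φ is bijective; in particular S →ₗ[B] B is a free S-module of rank one generated by Φ. -/
set_option synthInstance.maxHeartbeats 1000000
set_option maxHeartbeats 1000000

open MvPolynomial

private lemma mod_aux_cartier (p A B' : ℕ) (hA : A < p) (hB : B' < p) :
    (p - 1 - A + B') % p = p - 1 ↔ A = B' := by
  rcases le_or_gt B' A with h | h
  · rw [Nat.mod_eq_of_lt (by omega)]
    omega
  · have he : (p - 1 - A + B') = p + (B' - A - 1) := by omega
    rw [he, Nat.add_mod_left, Nat.mod_eq_of_lt (by omega)]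
    omega

/-- The relative Cartier/trace generator in the polynomial case. Let
`S = MvPolynomial (Fin n) R` with `CharP R p`, `B = R[X 0 ^ p, …, X (n-1) ^ p]`, and let
`𝔅` be the monomial `p`-basis of `S` over `B`. Let `Φ := 𝔅.coord (fun _ => p - 1)` be the
coordinate functional dual to `∏ i, (X i) ^ (p-1)`, and let `s • φ` denote the `S`-action
on `S →ₗ[B] B` given by `(s • φ) t = φ (s * t)` (realized below as `φ ∘ₗ mulLeft B s`).
Then (i) every coordinate functional `𝔅.coord a` equals
`(∏ i, (X i) ^ (p - 1 - a i)) • Φ`, and (ii) the map `s ↦ s • Φ` is bijective, so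
`S →ₗ[B] B` is free of rank one over `S`, generated by `Φ`. -/
theorem coord_dual_pBasis_mvPolynomial (p : ℕ) (hp : p.Prime) (R : Type*) [CommRing R]
    [CharP R p] (n : ℕ)
    (𝔅 : Module.Basis (Fin n → Fin p)
        (Algebra.adjoin R (Set.range fun i : Fin n => (X i : MvPolynomial (Fin n) R) ^ p))
        (MvPolynomial (Fin n) R))
    (h𝔅 : ∀ a : Fin n → Fin p, 𝔅 a = ∏ i, (X i : MvPolynomial (Fin n) R) ^ (a i : ℕ)) :
    (∀ (a : Fin n → Fin p) (t : MvPolynomial (Fin n) R),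
        𝔅.coord a t =
          𝔅.coord (fun _ => ⟨p - 1, Nat.sub_lt hp.pos one_pos⟩)
            ((∏ i, (X i : MvPolynomial (Fin n) R) ^ (p - 1 - (a i : ℕ))) * t)) ∧
      Function.Bijective (fun s : MvPolynomial (Fin n) R =>
        (𝔅.coord (fun _ => ⟨p - 1, Nat.sub_lt hp.pos one_pos⟩)).comp
          (LinearMap.mulLeft
            (Algebra.adjoin R (Set.range fun i : Fin n => (X i : MvPolynomial (Fin n) R) ^ p))
            s)) := by
  set q : Fin n → Fin p := fun _ => ⟨p - 1, Nat.sub_lt hp.pos one_pos⟩ with hqdef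
  have hmem : ∀ e : Fin n → ℕ,
      (∏ i, ((X i : MvPolynomial (Fin n) R) ^ p) ^ (e i / p)) ∈
        Algebra.adjoin R (Set.range fun i : Fin n => (X i : MvPolynomial (Fin n) R) ^ p) :=
    fun e => Subalgebra.prod_mem _ fun i _ =>
      Subalgebra.pow_mem _ (Algebra.subset_adjoin (Set.mem_range_self i)) _
  -- the coordinate of a general monomial
  have key : ∀ (e : Fin n → ℕ) (c : Fin n → Fin p),
      𝔅.coord c (∏ i, (X i : MvPolynomial (Fin n) R) ^ e i) =
        if (fun i => (⟨e i % p, Nat.mod_lt _ hp.pos⟩ : Fin p)) = c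
        then ⟨∏ i, ((X i : MvPolynomial (Fin n) R) ^ p) ^ (e i / p), hmem e⟩ else 0 := by
    intro e c
    have hdec : (∏ i, (X i : MvPolynomial (Fin n) R) ^ e i) =
        (⟨∏ i, ((X i : MvPolynomial (Fin n) R) ^ p) ^ (e i / p), hmem e⟩ :
            Algebra.adjoin R (Set.range fun i : Fin n => (X i : MvPolynomial (Fin n) R) ^ p)) •
          𝔅 (fun i => ⟨e i % p, Nat.mod_lt _ hp.pos⟩) := by
      rw [h𝔅, Subalgebra.smul_def, smul_eq_mul]
      push_cast
      rw [← Finset.prod_mul_distrib]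
      refine Finset.prod_congr rfl fun i _ => ?_
      rw [← pow_mul, ← pow_add, Nat.div_add_mod]
    rw [hdec, map_smul, Module.Basis.coord_apply, Module.Basis.repr_self, Finsupp.single_apply]
    rw [smul_eq_mul, mul_ite, mul_one, mul_zero]
  -- part (i) as an equality of linear maps
  have part1 : ∀ a : Fin n → Fin p,
      𝔅.coord a = (𝔅.coord q).comp
        (LinearMap.mulLeft
          (Algebra.adjoin R (Set.range fun i : Fin n => (X i : MvPolynomial (Fin n) R) ^ p))
          (∏ i, (X i : MvPolynomial (Fin n) R) ^ (p - 1 - (a i : ℕ)))) := by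
    intro a
    refine 𝔅.ext fun b => ?_
    simp only [LinearMap.comp_apply, LinearMap.mulLeft_apply]
    conv_rhs => rw [h𝔅 b, ← Finset.prod_mul_distrib]
    simp only [← pow_add]
    rw [key, Module.Basis.coord_apply, Module.Basis.repr_self, Finsupp.single_apply]
    by_cases hab : b = a
    · subst hab
      have hcond : (fun i => (⟨(p - 1 - (b i : ℕ) + (b i : ℕ)) % p,
          Nat.mod_lt _ hp.pos⟩ : Fin p)) = q := by
        funext i
        have hbi := (b i).is_lt
        exact Fin.ext (by simp only [hqdef]; rw [(mod_aux_cartier p _ _ hbi hbi).2 rfl])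
      rw [if_pos rfl, if_pos hcond]
      refine Subtype.ext ?_
      have hd : ∀ i : Fin n, (p - 1 - (b i : ℕ) + (b i : ℕ)) / p = 0 := fun i => by
        have hbi := (b i).is_lt
        exact Nat.div_eq_of_lt (by omega)
      simp [hd]
    · rw [if_neg hab, if_neg]
      intro hcond
      apply hab
      funext i
      have h1 := congrFun hcond i
      have h2 : (p - 1 - (a i : ℕ) + (b i : ℕ)) % p = p - 1 := by
        simpa [hqdef, Fin.ext_iff] using h1
      exact Fin.ext ((mod_aux_cartier p _ _ (a i).is_lt (b i).is_lt).1 h2).symm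
  refine ⟨fun a t => by rw [part1 a]; rfl, ?_, ?_⟩
  · -- injectivity
    intro s s' h
    refine 𝔅.ext_elem fun a => ?_
    have h' := congrArg (fun φ => φ (∏ i, (X i : MvPolynomial (Fin n) R) ^ (p - 1 - (a i : ℕ)))) h
    simp only [LinearMap.comp_apply, LinearMap.mulLeft_apply] at h'
    have e1 : 𝔅.repr s a = 𝔅.coord a s := rfl
    have e2 : 𝔅.repr s' a = 𝔅.coord a s' := rfl
    rw [e1, e2, part1 a]
    simp only [LinearMap.comp_apply, LinearMap.mulLeft_apply]
    rw [mul_comm, h', mul_comm]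
  · -- surjectivity
    intro φ
    refine ⟨∑ a : Fin n → Fin p,
      (φ (𝔅 a) : MvPolynomial (Fin n) R) *
        ∏ i, (X i : MvPolynomial (Fin n) R) ^ (p - 1 - (a i : ℕ)), ?_⟩
    refine 𝔅.ext fun b => ?_
    simp only [LinearMap.comp_apply, LinearMap.mulLeft_apply, Finset.sum_mul]
    rw [map_sum]
    have hterm : ∀ a : Fin n → Fin p,
        𝔅.coord q ((φ (𝔅 a) : MvPolynomial (Fin n) R) *
            (∏ i, (X i : MvPolynomial (Fin n) R) ^ (p - 1 - (a i : ℕ))) * 𝔅 b) =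
          φ (𝔅 a) * (if a = b then 1 else 0) := by
      intro a
      rw [mul_assoc, ← smul_eq_mul (α := MvPolynomial (Fin n) R), ← Subalgebra.smul_def,
        map_smul, smul_eq_mul]
      congr 1
      have hh := congrFun (congrArg DFunLike.coe (part1 a)) (𝔅 b)
      simp only [LinearMap.comp_apply, LinearMap.mulLeft_apply] at hh
      rw [← hh, Module.Basis.coord_apply, Module.Basis.repr_self, Finsupp.single_apply]
      simp [eq_comm]
    simp only [hterm, mul_ite, mul_one, mul_zero]
    rw [Finset.sum_ite_eq' (Finset.univ : Finset (Fin n → Fin p)) b (fun a => φ (𝔅 a))]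
    simp
end

section
/- Let R be a commutative ring and S a commutative local ring with Algebra R S, and let n : ℕ. Suppose Ω[S⁄R] is a free S-module of rank n, i.e., there exists a basis of Ω[S⁄R] indexed by Fin n. Then there exist elements x : Fin n → S and a basis b : Basis (Fin n) S (Ω[S⁄R]) such that b i = D R S (x i) for all i. (Differential bases exist locally.) -/
open TensorProduct in

/-- Differential bases exist locally: if `S` is a local ring and the module of Kähler
differentials `Ω[S⁄R]` is free of rank `n` over `S`, then there are elements
`x : Fin n → S` such that the `D R S (x i)` form a basis of `Ω[S⁄R]`. -/
theorem exists_differential_basis_of_free (R S : Type*) [CommRing R] [CommRing S]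
    [IsLocalRing S] [Algebra R S] (n : ℕ) (h : Nonempty (Module.Basis (Fin n) S (Ω[S⁄R]))) :
    ∃ (x : Fin n → S) (b : Module.Basis (Fin n) S (Ω[S⁄R])),
      ∀ i, b i = KaehlerDifferential.D R S (x i) := by
  classical
  obtain ⟨b₀⟩ := h
  haveI : Module.Finite S (Ω[S⁄R]) := Module.Finite.of_basis b₀
  set k := IsLocalRing.ResidueField S
  -- the family `1 ⊗ D s` spans `k ⊗ Ω`
  set v : S → k ⊗[S] (Ω[S⁄R]) := fun s => (1 : k) ⊗ₜ[S] (KaehlerDifferential.D R S s) with hv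
  have hS : Submodule.span S (Set.range v) = ⊤ := by
    have h1 : Submodule.span S (Set.range v) =
        (Submodule.span S (Set.range (KaehlerDifferential.D R S))).map
          (TensorProduct.mk S k (Ω[S⁄R]) 1) := by
      rw [Submodule.map_span, ← Set.range_comp]
      rfl
    rw [h1, KaehlerDifferential.span_range_derivation,
      IsLocalRing.map_tensorProduct_mk_eq_top]
  have hvspan : Submodule.span k (Set.range v) = ⊤ := by
    rw [← Submodule.restrictScalars_eq_top_iff (S := S), eq_top_iff, ← hS]
    exact Submodule.span_le.mpr (Submodule.subset_span (R := k))
  -- extract a basis of `k ⊗ Ω` from this spanning family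
  obtain ⟨bs, hsub, hspan, hli⟩ := exists_linearIndependent k (Set.range v)
  rw [hvspan] at hspan
  let c0 : Module.Basis bs k (k ⊗[S] (Ω[S⁄R])) :=
    Module.Basis.mk hli (by rw [Subtype.range_val, hspan])
  let e : bs ≃ Fin n := c0.indexEquiv ((Algebra.TensorProduct.basis k b₀))
  let c : Module.Basis (Fin n) k (k ⊗[S] (Ω[S⁄R])) := c0.reindex e
  -- choose preimages
  have hc : ∀ i, ∃ s : S, v s = c i := by
    intro i
    have : (c i : k ⊗[S] (Ω[S⁄R])) ∈ Set.range v := by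
      apply hsub
      have : c i = c0 (e.symm i) := by simp [c]
      rw [this, Module.Basis.mk_apply]
      exact (e.symm i).2
    obtain ⟨s, hs⟩ := this
    exact ⟨s, hs⟩
  choose x hx using hc
  -- span over S
  have hspanS : Submodule.span S (Set.range fun i => KaehlerDifferential.D R S (x i)) = ⊤ :=
    IsLocalRing.span_eq_top_of_tmul_eq_basis (f := fun i => KaehlerDifferential.D R S (x i)) c
      (fun i => hx i)
  -- linear independence via Orzech property
  let g : (Fin n →₀ S) →ₗ[S] (Ω[S⁄R]) :=
    Finsupp.linearCombination S (fun i => KaehlerDifferential.D R S (x i))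
  have hgsurj : Function.Surjective g := by
    rw [← LinearMap.range_eq_top, Finsupp.range_linearCombination]
    exact hspanS
  have hendo : Function.Surjective (b₀.repr.toLinearMap ∘ₗ g) :=
    b₀.repr.surjective.comp hgsurj
  have hinj : Function.Injective (b₀.repr.toLinearMap ∘ₗ g) :=
    OrzechProperty.injective_of_surjective_endomorphism _ hendo
  have hginj : Function.Injective g := by
    intro a b hab
    exact hinj (by simp [LinearMap.comp_apply, hab])
  have hli' : LinearIndependent S (fun i => KaehlerDifferential.D R S (x i)) := by
    rw [linearIndependent_iff_injective_finsuppLinearCombination]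
    exact hginj
  refine ⟨x, Module.Basis.mk hli' (by rw [hspanS]), fun i => ?_⟩
  rw [Module.Basis.mk_apply]
end

section
/- Let p be an odd natural number with p ≥ 3, k ≥ 1 a natural number, and b an odd natural number with 0 < b < p^k. Then the following are equivalent: (i) for every r with 1 ≤ r < k and every odd natural number a with 0 < a < p^r, it is NOT the case that a * p^(k−r) ≤ b ∧ b ≤ (a+1) * p^(k−r); (ii) for every i with 1 ≤ i ≤ k−1, the base-p digit (b / p^i) % p is even. (That is, b/p^k lies in no interval [a/p^r, (a+1)/p^r] with a odd and r < k if and only if all base-p digits of b except the units digit are even.) -/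
/-- For `p ≥ 3` odd, `k ≥ 1`, and `b` odd with `0 < b < p ^ k`: the fraction `b / p ^ k`
lies in no interval `[a / p ^ r, (a + 1) / p ^ r]` with `a` odd, `0 < a < p ^ r`, `r < k`
(stated in integer form) if and only if all base-`p` digits of `b` except the units digit
are even. -/
theorem avoid_intervals_iff_digits_even (p k b : ℕ) (hp : Odd p) (hp3 : 3 ≤ p)
    (hk : 1 ≤ k) (hb : Odd b) (hb0 : 0 < b) (hbk : b < p ^ k) :
    (∀ r, 1 ≤ r → r < k → ∀ a, Odd a → 0 < a → a < p ^ r →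
        ¬(a * p ^ (k - r) ≤ b ∧ b ≤ (a + 1) * p ^ (k - r))) ↔
      (∀ i, 1 ≤ i → i ≤ k - 1 → Even ((b / p ^ i) % p)) := by
  have hp0 : 0 < p := by omega
  have hbtop : b / p ^ k = 0 := Nat.div_eq_of_lt hbk
  have hdm : ∀ j : ℕ, b / p ^ j = p * (b / p ^ (j + 1)) + (b / p ^ j) % p := by
    intro j
    conv_lhs => rw [← Nat.div_add_mod (b / p ^ j) p]
    rw [Nat.div_div_eq_div_mul, ← pow_succ]
  constructor
  · intro H i hi1 hi2
    -- first: b / p ^ j is even for all j in range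
    have hdiv : ∀ j, 1 ≤ j → j ≤ k - 1 → Even (b / p ^ j) := by
      intro j hj1 hj2
      by_contra hodd
      rw [Nat.not_even_iff_odd] at hodd
      have hq0 : 0 < b / p ^ j := hodd.pos
      have hqlt : b / p ^ j < p ^ (k - j) := by
        rw [Nat.div_lt_iff_lt_mul (pow_pos hp0 j)]
        calc b < p ^ k := hbk
        _ = p ^ (k - j) * p ^ j := by rw [← pow_add]; congr 1; omega
      have hH := H (k - j) (by omega) (by omega) (b / p ^ j) hodd hq0 hqlt
      apply hH
      have hkj : k - (k - j) = j := by omega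
      rw [hkj]
      refine ⟨Nat.div_mul_le_self b (p ^ j), ?_⟩
      have h1 := Nat.div_add_mod b (p ^ j)
      have h2 := Nat.mod_lt b (pow_pos hp0 j)
      nlinarith [h1, h2]
    have h1 := hdiv i hi1 hi2
    have h2 : Even (p * (b / p ^ (i + 1))) := by
      by_cases hik : i = k - 1
      · have hik' : i + 1 = k := by omega
        rw [hik', hbtop]
        simp
      · exact (hdiv (i + 1) (by omega) (by omega)).mul_left p
    have heq := hdm i
    rw [Nat.even_iff] at h1 h2 ⊢
    omega
  · intro H r hr1 hr2 a ha ha0 halt hab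
    obtain ⟨hlb, hub⟩ := hab
    set i := k - r with hi
    have key : ∀ m, ∀ j, 1 ≤ j → j ≤ k - 1 → k - 1 - j ≤ m → Even (b / p ^ j) := by
      intro m
      induction m with
      | zero =>
        intro j hj1 hj2 hj3
        have hjk : j = k - 1 := by omega
        subst hjk
        have hlt : b / p ^ (k - 1) < p := by
          rw [Nat.div_lt_iff_lt_mul (pow_pos hp0 _)]
          calc b < p ^ k := hbk
          _ = p * p ^ (k - 1) := by rw [← pow_succ']; congr 1; omega
        have hH := H (k - 1) hj1 le_rfl
        rwa [Nat.mod_eq_of_lt hlt] at hH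
      | succ n ih =>
        intro j hj1 hj2 hj3
        by_cases hjk : j = k - 1
        · subst hjk
          have hlt : b / p ^ (k - 1) < p := by
            rw [Nat.div_lt_iff_lt_mul (pow_pos hp0 _)]
            calc b < p ^ k := hbk
            _ = p * p ^ (k - 1) := by rw [← pow_succ']; congr 1; omega
          have hH := H (k - 1) hj1 le_rfl
          rwa [Nat.mod_eq_of_lt hlt] at hH
        · have he1 : Even (b / p ^ (j + 1)) := ih (j + 1) (by omega) (by omega) (by omega)
          have hd : Even ((b / p ^ j) % p) := H j hj1 hj2
          have heq := hdm j
          have h2 := he1.mul_left p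
          rw [Nat.even_iff] at h2 hd ⊢
          omega
    have heven : Even (b / p ^ i) := key (k - 1 - i) i (by omega) (by omega) le_rfl
    have hle : a ≤ b / p ^ i := (Nat.le_div_iff_mul_le (pow_pos hp0 i)).mpr hlb
    have hub' : b / p ^ i ≤ a + 1 := by
      have h := Nat.div_le_div_right (c := p ^ i) hub
      rwa [Nat.mul_div_cancel _ (pow_pos hp0 i)] at h
    rcases Nat.lt_or_ge (b / p ^ i) (a + 1) with h | h
    · have hq : b / p ^ i = a := by omega
      rw [Nat.even_iff] at heven
      rw [Nat.odd_iff] at ha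
      omega
    · have hq : b / p ^ i = a + 1 := by omega
      have hge : (a + 1) * p ^ i ≤ b := by
        rw [← hq]; exact Nat.div_mul_le_self b (p ^ i)
      have hbe : b = (a + 1) * p ^ i := le_antisymm hub hge
      have hbev : Even b := hbe ▸ (ha.add_one).mul_right (p ^ i)
      exact (Nat.not_odd_iff_even.mpr hbev) hb
end

section
/- Let F be a field, p a prime with CharP F p, and l a natural number with l ≤ p−1. In the polynomial ring F[x,y] (realized as MvPolynomial (Fin 2) F with x := X 0 and y := X 1), the colon ideal (Ideal.span {x^p, y^p} : Ideal.span {(x*y)^(p−l−1)}) equals Ideal.span {x^(l+1), y^(l+1)}. -/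
open MvPolynomial

/-- In `F[x,y]` with `char F = p` prime and `l ≤ p - 1`, the colon ideal
`((x^p, y^p) : ((xy)^(p-l-1)))` equals `(x^(l+1), y^(l+1))`. -/
theorem colon_ideal_eq (F : Type*) [Field F] (p : ℕ) (hp : p.Prime) [CharP F p]
    (l : ℕ) (hl : l ≤ p - 1) :
    Submodule.colon
        (Ideal.span {(X 0 : MvPolynomial (Fin 2) F) ^ p, (X 1 : MvPolynomial (Fin 2) F) ^ p})
        (Ideal.span {((X 0 : MvPolynomial (Fin 2) F) * X 1) ^ (p - l - 1)})
      = Ideal.span {(X 0 : MvPolynomial (Fin 2) F) ^ (l + 1),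
          (X 1 : MvPolynomial (Fin 2) F) ^ (l + 1)} := by
  classical
  have hp2 : 2 ≤ p := hp.two_le
  set m := p - l - 1 with hm
  set d : Fin 2 →₀ ℕ := Finsupp.single 0 m + Finsupp.single 1 m with hd
  have hg : ((X 0 : MvPolynomial (Fin 2) F) * X 1) ^ m = monomial d 1 := by
    rw [mul_pow, X_pow_eq_monomial, X_pow_eq_monomial, monomial_mul, mul_one]
  have hspan1 : Ideal.span {(X 0 : MvPolynomial (Fin 2) F) ^ p, (X 1 : MvPolynomial (Fin 2) F) ^ p}
      = Ideal.span ((fun s => monomial s (1 : F)) ''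
        {Finsupp.single (0 : Fin 2) p, Finsupp.single 1 p}) := by
    rw [Set.image_insert_eq, Set.image_singleton, X_pow_eq_monomial, X_pow_eq_monomial]
  have hspan2 : Ideal.span {(X 0 : MvPolynomial (Fin 2) F) ^ (l + 1),
      (X 1 : MvPolynomial (Fin 2) F) ^ (l + 1)}
      = Ideal.span ((fun s => monomial s (1 : F)) ''
        {Finsupp.single (0 : Fin 2) (l + 1), Finsupp.single 1 (l + 1)}) := by
    rw [Set.image_insert_eq, Set.image_singleton, X_pow_eq_monomial, X_pow_eq_monomial]
  ext f
  rw [show (Ideal.span {((X 0 : MvPolynomial (Fin 2) F) * X 1) ^ m} : Ideal (MvPolynomial (Fin 2) F)) = Submodule.span (MvPolynomial (Fin 2) F) {((X 0 : MvPolynomial (Fin 2) F) * X 1) ^ m} from rfl, Submodule.mem_colon_span_singleton, hg, hspan1, hspan2, smul_eq_mul,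
    mem_ideal_span_monomial_image, mem_ideal_span_monomial_image]
  have hsupp : (f * monomial d (1 : F)).support = f.support.map (addRightEmbedding d) := by
    rw [← single_eq_monomial]
    exact AddMonoidAlgebra.support_coeff_mul_single f 1 (by simp) d
  rw [hsupp]
  simp only [Finset.mem_map, addRightEmbedding_apply]
  constructor
  · intro h xi hxi
    obtain ⟨si, hsi, hle⟩ := h (xi + d) ⟨xi, hxi, rfl⟩
    rcases hsi with rfl | rfl
    · refine ⟨_, Set.mem_insert _ _, ?_⟩
      rw [Finsupp.single_le_iff] at hle ⊢
      simp [hd, Finsupp.add_apply, Finsupp.single_apply] at hle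
      omega
    · refine ⟨_, Set.mem_insert_of_mem _ rfl, ?_⟩
      rw [Finsupp.single_le_iff] at hle ⊢
      simp [hd, Finsupp.add_apply, Finsupp.single_apply] at hle
      omega
  · rintro h xi ⟨yi, hyi, rfl⟩
    obtain ⟨si, hsi, hle⟩ := h yi hyi
    rcases hsi with rfl | rfl
    · refine ⟨_, Set.mem_insert _ _, ?_⟩
      rw [Finsupp.single_le_iff] at hle ⊢
      simp [hd, Finsupp.add_apply, Finsupp.single_apply]
      omega
    · refine ⟨_, Set.mem_insert_of_mem _ rfl, ?_⟩
      rw [Finsupp.single_le_iff] at hle ⊢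
      simp [hd, Finsupp.add_apply, Finsupp.single_apply]
      omega
end

section
/- Let p be an odd prime, F a field with CharP F p, a an odd natural number with 0 < a < p, and e ≥ 1 a natural number. Set m := p^e − ((a+1)/2) * p^(e−1) (a natural number, since a is odd and a < p). Then every exponent pair (i, j) at which the polynomial (x+y)^(a * p^(e−1)) * (x*y)^m ∈ F[x,y] has a nonzero coefficient satisfies i ≥ p^e or j ≥ p^e. (Here F[x,y] is MvPolynomial (Fin 2) F with x := X 0, y := X 1, and the coefficient at (i,j) is the coefficient at the exponent function sending 0 ↦ i, 1 ↦ j.) -/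
open MvPolynomial

open Finset

/-- For an odd prime `p`, a field `F` of characteristic `p`, an odd `a` with `0 < a < p`,
`e ≥ 1`, and `m := p^e - ((a+1)/2) * p^(e-1)`: every exponent pair `(i, j)` at which the
polynomial `(x + y)^(a * p^(e-1)) * (x * y)^m ∈ F[x,y]` has a nonzero coefficient
satisfies `i ≥ p^e` or `j ≥ p^e`. -/
theorem coeff_ne_zero_imp_large_exponent (p : ℕ) (hp : p.Prime) (hodd : Odd p)
    (F : Type*) [Field F] [CharP F p] (a : ℕ) (ha : Odd a) (ha0 : 0 < a) (hap : a < p)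
    (e : ℕ) (he : 1 ≤ e) :
    ∀ i j : ℕ,
      MvPolynomial.coeff (Finsupp.single 0 i + Finsupp.single 1 j)
          (((X 0 : MvPolynomial (Fin 2) F) + X 1) ^ (a * p ^ (e - 1)) *
            ((X 0 : MvPolynomial (Fin 2) F) * X 1) ^ (p ^ e - ((a + 1) / 2) * p ^ (e - 1)))
        ≠ 0 →
      p ^ e ≤ i ∨ p ^ e ≤ j := by
  intro i j hcoeff
  haveI := Fact.mk hp
  haveI : ExpChar (MvPolynomial (Fin 2) F) p := .prime hp
  set q := p ^ (e - 1) with hq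
  set c := (a + 1) / 2 with hc
  set m := p ^ e - c * q with hm
  obtain ⟨t, hat⟩ := ha
  have hca : 2 * c = a + 1 := by omega
  have hq0 : 0 < q := pow_pos hp.pos _
  have hpe : p ^ e = p * q := by
    rw [hq, ← pow_succ']
    congr 1
    omega
  have hcp : c ≤ p := by omega
  have hmq : m = (p - c) * q := by rw [hm, hpe, ← Nat.sub_mul]
  -- rewrite the polynomial as a sum of monomials
  have hpoly : (((X 0 : MvPolynomial (Fin 2) F) + X 1) ^ (a * q) * (X 0 * X 1) ^ m)
      = ∑ k ∈ range (a + 1),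
          monomial (Finsupp.single 0 (k * q + m) + Finsupp.single 1 ((a - k) * q + m))
            ((a.choose k : F)) := by
    have h1 : ((X 0 : MvPolynomial (Fin 2) F) + X 1) ^ (a * q)
        = (X 0 ^ q + X 1 ^ q) ^ a := by
      rw [mul_comm, pow_mul, add_pow_char_pow]
    rw [h1, add_pow, Finset.sum_mul]
    refine Finset.sum_congr rfl fun k hk => ?_
    rw [mul_pow, ← pow_mul, ← pow_mul]
    rw [show (↑(a.choose k) : MvPolynomial (Fin 2) F) = C ((a.choose k : F)) from by simp]
    rw [show (X 0 : MvPolynomial (Fin 2) F) ^ (q * k) * X 1 ^ (q * (a - k)) *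
          C ((a.choose k : F)) * (X 0 ^ m * X 1 ^ m)
        = C ((a.choose k : F)) * (monomial (Finsupp.single 0 (k * q + m)) 1 *
            monomial (Finsupp.single 1 ((a - k) * q + m)) 1) from by
      rw [← X_pow_eq_monomial, ← X_pow_eq_monomial]; ring]
    rw [monomial_mul, one_mul, C_mul_monomial, mul_one]
  rw [hpoly, coeff_sum] at hcoeff
  obtain ⟨k, hk, hknz⟩ := Finset.exists_ne_zero_of_sum_ne_zero hcoeff
  rw [coeff_monomial] at hknz
  have heq : Finsupp.single (0 : Fin 2) (k * q + m) + Finsupp.single 1 ((a - k) * q + m)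
      = Finsupp.single 0 i + Finsupp.single 1 j := by
    by_contra h; exact hknz (if_neg h)
  have hi : i = k * q + m := by
    have := DFunLike.congr_fun heq 0
    simpa [Finsupp.single_apply] using this.symm
  have hj : j = (a - k) * q + m := by
    have := DFunLike.congr_fun heq 1
    simpa [Finsupp.single_apply] using this.symm
  simp only [Finset.mem_range] at hk
  rcases le_or_gt c k with hkc | hkc
  · left
    rw [hi, hmq, hpe, ← Nat.add_mul]
    exact Nat.mul_le_mul_right _ (by omega)
  · right
    rw [hj, hmq, hpe, ← Nat.add_mul]
    exact Nat.mul_le_mul_right _ (by omega)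
end
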